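/- arXiv:1111.1295 — 2 statements merged into one kernel-verified Lean document; each statement's English description precedes it below -/
import Mathlib

section
/- For all natural numbers k ≥ 1 and q ≥ 1 with n = k + q, the kernels of the two operators on H_{k,q} intersect trivially: ker(d̆_q : H_{k,q} → H_{k−1,q+1}) ∩ ker(d̆*_{q−1} : H_{k,q} → H_{k+1,q−1}) = {0}. -/
open scoped BigOperators

noncomputable section

variable (F : Type*) [Field F] [CharZero F] (H : Type*) [AddCommGroup H] [Module F H]

/-- The `n`-th tensor power of `H` over `F`. -/
abbrev TP (n : ℕ) : Type _ := PiTensorProduct F (fun _ : Fin n => H)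

/-- The action of a permutation `σ ∈ S_n` on the `n`-th tensor power,
permuting the tensor factors. -/
def permMap (n : ℕ) (σ : Equiv.Perm (Fin n)) : TP F H n →ₗ[F] TP F H n :=
  (PiTensorProduct.reindex F (fun _ : Fin n => H) σ).toLinearMap

/-- Identification of tensor powers of equal degrees. -/
def tpCast {m m' : ℕ} (hm : m = m') : TP F H m →ₗ[F] TP F H m' :=
  (PiTensorProduct.reindex F (fun _ : Fin m => H) (finCongr hm)).toLinearMap

/-- The permutations of `{1, …, n}` moving only positions in `a`. -/
def permsOn (n : ℕ) (a : Finset (Fin n)) : Finset (Equiv.Perm (Fin n)) :=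
  Finset.univ.filter fun σ => ∀ i, i ∉ a → σ i = i

/-- `S_a`: symmetrisation over the positions in `a` (the average over all
permutations of the positions in `a`, fixing the other positions). -/
def symOn (n : ℕ) (a : Finset (Fin n)) : TP F H n →ₗ[F] TP F H n :=
  (a.card.factorial : F)⁻¹ • ∑ σ ∈ permsOn n a, permMap F H n σ

/-- `A_a`: skew-symmetrisation over the positions in `a` (the signed average over
all permutations of the positions in `a`, fixing the other positions). -/
def altOn (n : ℕ) (a : Finset (Fin n)) : TP F H n →ₗ[F] TP F H n :=
  (a.card.factorial : F)⁻¹ • ∑ σ ∈ permsOn n a, (Equiv.Perm.sign σ : ℤ) • permMap F H n σ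

/-- The first `k` positions of `{1, …, n}`. -/
def firstSet (n k : ℕ) : Finset (Fin n) := Finset.univ.filter fun i => (i : ℕ) < k

/-- The last `m` positions of `{1, …, n}`. -/
def lastSet (n m : ℕ) : Finset (Fin n) := Finset.univ.filter fun i => n - m ≤ (i : ℕ)

/-- `H^{⊙a,∧aᶜ}`: the image of `S_a ∘ A_{aᶜ}`, the subspace of `n`-tensors symmetric in
the positions of `a` and skew-symmetric in the positions of `aᶜ`. -/
def Hgen (n : ℕ) (a : Finset (Fin n)) : Submodule F (TP F H n) :=
  LinearMap.range (symOn F H n a ∘ₗ altOn F H n aᶜ)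

/-- `H_{k,n-k} = H^{⊙k} ⊗ H^{∧(n-k)}`: the subspace of `n`-tensors symmetric in the
first `k` positions and skew-symmetric in the remaining positions. -/
def Hmix (n k : ℕ) : Submodule F (TP F H n) := Hgen F H n (firstSet n k)

/-- `H^{⊙[k],∧[n-k]}`: the span of the subspaces `H^{⊙a,∧aᶜ}` over all `k`-element
subsets `a ⊆ {1, …, n}`. -/
def HmixSpan (n k : ℕ) : Submodule F (TP F H n) :=
  ⨆ a ∈ {a : Finset (Fin n) | a.card = k}, Hgen F H n a

/-- The global operator whose restriction to `H_{k,q}` (with `m = q + 1`, `n = k + q`)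
is `d̆_q`: skew-symmetrisation of the last `m` positions, scaled by `m`. -/
def dOp (n m : ℕ) : TP F H n →ₗ[F] TP F H n := (m : F) • altOn F H n (lastSet n m)

/-- The global operator whose restriction to `H_{k-1,q+1}` (with `m = k`, `n = k + q`)
is `d̆*_q`: symmetrisation of the first `m` positions, scaled by `m`. -/
def dStarOp (n m : ℕ) : TP F H n →ₗ[F] TP F H n := (m : F) • symOn F H n (firstSet n m)

/-- The elementary element `h₁⊙…⊙h_k ⊗ x₁∧…∧x_q` of `H_{k,q} ⊆ H^{⊗(k+q)}`. -/
def elem (k q : ℕ) (h : Fin k → H) (x : Fin q → H) : TP F H (k + q) :=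
  ∑ ρ : Equiv.Perm (Fin k), ∑ τ : Equiv.Perm (Fin q),
    (Equiv.Perm.sign τ : ℤ) •
      (PiTensorProduct.tprod F (Fin.append (h ∘ ρ) (x ∘ τ)) : TP F H (k + q))

namespace Aux8

open Equiv Equiv.Perm Finset

variable {n : ℕ}

theorem mem_permsOn {a : Finset (Fin n)} {σ : Equiv.Perm (Fin n)} :
    σ ∈ permsOn n a ↔ ∀ i ∉ a, σ i = i := by
  simp [permsOn]

theorem permsOn_apply_mem {a : Finset (Fin n)} {σ : Equiv.Perm (Fin n)}
    (hσ : σ ∈ permsOn n a) {i : Fin n} (hi : i ∈ a) : σ i ∈ a := by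
  by_contra h
  have h1 : σ (σ i) = σ i := mem_permsOn.1 hσ (σ i) h
  have h2 : σ i = i := σ.injective h1
  rw [h2] at h
  exact h hi

theorem mem_iff_apply_mem {a : Finset (Fin n)} {σ : Equiv.Perm (Fin n)}
    (hσ : σ ∈ permsOn n a) (i : Fin n) : i ∈ a ↔ σ i ∈ a := by
  refine ⟨fun h => permsOn_apply_mem hσ h, fun h => ?_⟩
  by_contra hi
  rw [mem_permsOn.1 hσ i hi] at h
  exact hi h

theorem one_mem_permsOn (a : Finset (Fin n)) : (1 : Equiv.Perm (Fin n)) ∈ permsOn n a :=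
  mem_permsOn.2 fun _ _ => rfl

theorem mul_mem_permsOn {a : Finset (Fin n)} {σ τ : Equiv.Perm (Fin n)}
    (hσ : σ ∈ permsOn n a) (hτ : τ ∈ permsOn n a) : σ * τ ∈ permsOn n a :=
  mem_permsOn.2 fun i hi => by
    have := mem_permsOn.1 hτ i hi
    simp only [Equiv.Perm.mul_apply, this, mem_permsOn.1 hσ i hi]

theorem inv_mem_permsOn {a : Finset (Fin n)} {σ : Equiv.Perm (Fin n)}
    (hσ : σ ∈ permsOn n a) : σ⁻¹ ∈ permsOn n a :=
  mem_permsOn.2 fun i hi => by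
    conv_lhs => rw [← mem_permsOn.1 hσ i hi]
    exact σ.symm_apply_apply i

theorem swap_mem_permsOn {a : Finset (Fin n)} {x y : Fin n} (hx : x ∈ a) (hy : y ∈ a) :
    Equiv.swap x y ∈ permsOn n a :=
  mem_permsOn.2 fun i hi =>
    Equiv.swap_apply_of_ne_of_ne (fun h => hi (h ▸ hx)) (fun h => hi (h ▸ hy))

/-- Reindex a sum over `permsOn n a` by left multiplication. -/
theorem sum_permsOn_mul_left {M : Type*} [AddCommMonoid M] {a : Finset (Fin n)}
    {σ : Equiv.Perm (Fin n)} (hσ : σ ∈ permsOn n a) (f : Equiv.Perm (Fin n) → M) :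
    ∑ τ ∈ permsOn n a, f (σ * τ) = ∑ τ ∈ permsOn n a, f τ := by
  refine Finset.sum_nbij' (fun τ => σ * τ) (fun τ => σ⁻¹ * τ)
    (fun τ hτ => mul_mem_permsOn hσ hτ)
    (fun τ hτ => mul_mem_permsOn (inv_mem_permsOn hσ) hτ)
    (fun τ _ => by group) (fun τ _ => by group) (fun τ _ => rfl)

theorem sum_permsOn_mul_right {M : Type*} [AddCommMonoid M] {a : Finset (Fin n)}
    {σ : Equiv.Perm (Fin n)} (hσ : σ ∈ permsOn n a) (f : Equiv.Perm (Fin n) → M) :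
    ∑ τ ∈ permsOn n a, f (τ * σ) = ∑ τ ∈ permsOn n a, f τ := by
  refine Finset.sum_nbij' (fun τ => τ * σ) (fun τ => τ * σ⁻¹)
    (fun τ hτ => mul_mem_permsOn hτ hσ)
    (fun τ hτ => mul_mem_permsOn hτ (inv_mem_permsOn hσ))
    (fun τ _ => by group) (fun τ _ => by group) (fun τ _ => rfl)

variable {F : Type*} [Field F] [CharZero F] {H : Type*} [AddCommGroup H] [Module F H]

theorem permMap_apply_apply (σ τ : Equiv.Perm (Fin n)) (x : TP F H n) :
    permMap F H n σ (permMap F H n τ x) = permMap F H n (σ * τ) x := by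
  simp only [permMap, LinearEquiv.coe_coe]
  exact PiTensorProduct.reindex_reindex τ σ x

theorem permMap_one (x : TP F H n) : permMap F H n 1 x = x := by
  simp only [permMap, LinearEquiv.coe_coe]
  rw [show ((1 : Equiv.Perm (Fin n))) = Equiv.refl (Fin n) from rfl,
    PiTensorProduct.reindex_refl]
  rfl

theorem smul_sum_int {M : Type*} [AddCommGroup M] {ι : Type*} (s : Finset ι) (z : ℤ)
    (f : ι → M) : ∑ i ∈ s, z • f i = z • ∑ i ∈ s, f i :=
  (Finset.smul_sum).symm

theorem lm_zsmul_apply (z : ℤ) (f : TP F H n →ₗ[F] TP F H n) (x : TP F H n) :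
    (z • f) x = z • f x := rfl

theorem units_smul_helper {M : Type*} [AddCommGroup M] (u w : ℤˣ) (y : M) :
    (u : ℤ) • ((u * w : ℤˣ) : ℤ) • y = (w : ℤ) • y := by
  rw [smul_smul, ← Units.val_mul, ← mul_assoc, Int.units_mul_self, one_mul]

theorem units_smul_helper' {M : Type*} [AddCommGroup M] (u w : ℤˣ) (y : M) :
    (u : ℤ) • ((w * u : ℤˣ) : ℤ) • y = (w : ℤ) • y := by
  rw [mul_comm w u]; exact units_smul_helper u w y

theorem card_permsOn (a : Finset (Fin n)) : (permsOn n a).card = a.card.factorial := by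
  classical
  have key : (permsOn n a).card = (Finset.univ : Finset (Equiv.Perm {x // x ∈ a})).card := by
    refine Finset.card_bij' (fun σ hσ => σ.subtypePerm (fun x => (mem_iff_apply_mem hσ x).symm))
      (fun τ _ => Equiv.Perm.ofSubtype τ) (fun _ _ => Finset.mem_univ _)
      (fun τ _ => mem_permsOn.2 fun i hi => Equiv.Perm.ofSubtype_apply_of_not_mem τ hi)
      (fun σ hσ => ?_) (fun τ _ => ?_)
    · exact Equiv.Perm.ofSubtype_subtypePerm _ fun x hx => by
        by_contra hmem
        exact hx (mem_permsOn.1 hσ x hmem)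
    · exact Equiv.Perm.subtypePerm_ofSubtype τ
  rw [key, Finset.card_univ, Fintype.card_perm, Fintype.card_coe]

theorem card_firstSet {k : ℕ} (h : k ≤ n) : (firstSet n k).card = k := by
  have : (firstSet n k).card = (Finset.univ : Finset (Fin k)).card := by
    refine Finset.card_bij' (fun i hi => ⟨(i : ℕ), by simpa [firstSet] using hi⟩)
      (fun j _ => ⟨(j : ℕ), lt_of_lt_of_le j.2 h⟩) (fun _ _ => Finset.mem_univ _)
      (fun j _ => by simp [firstSet]) (fun i hi => by simp) (fun j _ => by simp)
  rw [this, Finset.card_univ, Fintype.card_fin]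

theorem card_lastSet {m : ℕ} (h : m ≤ n) : (lastSet n m).card = m := by
  have : (lastSet n m).card = (Finset.univ : Finset (Fin m)).card := by
    refine Finset.card_bij' (fun i hi => ⟨(i : ℕ) - (n - m), by
        simp only [lastSet, Finset.mem_filter] at hi
        omega⟩)
      (fun j _ => ⟨(j : ℕ) + (n - m), by have := j.2; omega⟩) (fun _ _ => Finset.mem_univ _)
      (fun j _ => by
        simp only [lastSet, Finset.mem_filter]
        exact ⟨Finset.mem_univ _, by omega⟩)
      (fun i hi => ?_) (fun j _ => ?_)
    · simp only [lastSet, Finset.mem_filter] at hi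
      have : n - m ≤ (i : ℕ) := hi.2
      apply Fin.ext
      simp only
      omega
    · apply Fin.ext
      simp only
      omega
  rw [this, Finset.card_univ, Fintype.card_fin]

/-- Left absorption for symmetrisation. -/
theorem permMap_symOn {a : Finset (Fin n)} {σ : Equiv.Perm (Fin n)} (hσ : σ ∈ permsOn n a)
    (x : TP F H n) : permMap F H n σ (symOn F H n a x) = symOn F H n a x := by
  rw [symOn, LinearMap.smul_apply, LinearMap.sum_apply, map_smul, map_sum]
  congr 1
  calc ∑ τ ∈ permsOn n a, permMap F H n σ (permMap F H n τ x)
      = ∑ τ ∈ permsOn n a, permMap F H n (σ * τ) x :=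
        Finset.sum_congr rfl fun τ _ => permMap_apply_apply σ τ x
    _ = ∑ τ ∈ permsOn n a, permMap F H n τ x :=
        sum_permsOn_mul_left hσ (fun ρ => permMap F H n ρ x)

/-- Left absorption for skew-symmetrisation, with sign. -/
theorem permMap_altOn {a : Finset (Fin n)} {σ : Equiv.Perm (Fin n)} (hσ : σ ∈ permsOn n a)
    (x : TP F H n) :
    permMap F H n σ (altOn F H n a x)
      = (Equiv.Perm.sign σ : ℤ) • altOn F H n a x := by
  rw [altOn, LinearMap.smul_apply, LinearMap.sum_apply, map_smul, map_sum]
  simp only [LinearMap.smul_apply, lm_zsmul_apply, map_zsmul]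
  rw [smul_comm]
  congr 1
  calc ∑ τ ∈ permsOn n a, (Equiv.Perm.sign τ : ℤ) • permMap F H n σ (permMap F H n τ x)
      = ∑ τ ∈ permsOn n a,
          (Equiv.Perm.sign σ : ℤ) • (Equiv.Perm.sign (σ * τ) : ℤ) • permMap F H n (σ * τ) x := by
        refine Finset.sum_congr rfl fun τ _ => ?_
        rw [permMap_apply_apply, map_mul]
        exact (units_smul_helper _ _ _).symm
    _ = ∑ τ ∈ permsOn n a,
          (Equiv.Perm.sign σ : ℤ) • (Equiv.Perm.sign τ : ℤ) • permMap F H n τ x :=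
        sum_permsOn_mul_left hσ
          (fun ρ => (Equiv.Perm.sign σ : ℤ) • (Equiv.Perm.sign ρ : ℤ) • permMap F H n ρ x)
    _ = (Equiv.Perm.sign σ : ℤ) •
          ∑ τ ∈ permsOn n a, (Equiv.Perm.sign τ : ℤ) • permMap F H n τ x :=
        smul_sum_int _ _ _

/-- Right absorption for symmetrisation. -/
theorem symOn_permMap {a : Finset (Fin n)} {σ : Equiv.Perm (Fin n)} (hσ : σ ∈ permsOn n a)
    (x : TP F H n) : symOn F H n a (permMap F H n σ x) = symOn F H n a x := by
  rw [symOn, LinearMap.smul_apply, LinearMap.smul_apply, LinearMap.sum_apply,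
    LinearMap.sum_apply]
  congr 1
  calc ∑ τ ∈ permsOn n a, permMap F H n τ (permMap F H n σ x)
      = ∑ τ ∈ permsOn n a, permMap F H n (τ * σ) x :=
        Finset.sum_congr rfl fun τ _ => permMap_apply_apply τ σ x
    _ = ∑ τ ∈ permsOn n a, permMap F H n τ x :=
        sum_permsOn_mul_right hσ (fun ρ => permMap F H n ρ x)

/-- Right absorption for skew-symmetrisation, with sign. -/
theorem altOn_permMap {a : Finset (Fin n)} {σ : Equiv.Perm (Fin n)} (hσ : σ ∈ permsOn n a)
    (x : TP F H n) :
    altOn F H n a (permMap F H n σ x) = (Equiv.Perm.sign σ : ℤ) • altOn F H n a x := by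
  rw [altOn, LinearMap.smul_apply, LinearMap.smul_apply, LinearMap.sum_apply,
    LinearMap.sum_apply]
  simp only [LinearMap.smul_apply, lm_zsmul_apply]
  rw [smul_comm]
  congr 1
  calc ∑ τ ∈ permsOn n a, (Equiv.Perm.sign τ : ℤ) • permMap F H n τ (permMap F H n σ x)
      = ∑ τ ∈ permsOn n a,
          (Equiv.Perm.sign σ : ℤ) • (Equiv.Perm.sign (τ * σ) : ℤ) • permMap F H n (τ * σ) x := by
        refine Finset.sum_congr rfl fun τ _ => ?_
        rw [permMap_apply_apply, map_mul]
        exact (units_smul_helper' _ _ _).symm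
    _ = ∑ τ ∈ permsOn n a,
          (Equiv.Perm.sign σ : ℤ) • (Equiv.Perm.sign τ : ℤ) • permMap F H n τ x :=
        sum_permsOn_mul_right hσ
          (fun ρ => (Equiv.Perm.sign σ : ℤ) • (Equiv.Perm.sign ρ : ℤ) • permMap F H n ρ x)
    _ = (Equiv.Perm.sign σ : ℤ) •
          ∑ τ ∈ permsOn n a, (Equiv.Perm.sign τ : ℤ) • permMap F H n τ x :=
        smul_sum_int _ _ _

theorem permsOn_commute {a b : Finset (Fin n)} (hd : Disjoint a b)
    {σ τ : Equiv.Perm (Fin n)} (hσ : σ ∈ permsOn n a) (hτ : τ ∈ permsOn n b) :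
    σ * τ = τ * σ := by
  have : σ.Disjoint τ := fun i => by
    by_cases h : i ∈ a
    · exact Or.inr (mem_permsOn.1 hτ i (Finset.disjoint_left.1 hd h))
    · exact Or.inl (mem_permsOn.1 hσ i h)
  exact this.commute

/-- Commutation of `permMap σ` (σ supported on `a`) with `symOn b` for disjoint `b`. -/
theorem permMap_symOn_comm {a b : Finset (Fin n)} (hd : Disjoint a b)
    {σ : Equiv.Perm (Fin n)} (hσ : σ ∈ permsOn n a) (x : TP F H n) :
    permMap F H n σ (symOn F H n b x) = symOn F H n b (permMap F H n σ x) := by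
  simp only [symOn, LinearMap.smul_apply, LinearMap.sum_apply, map_smul, map_sum]
  congr 1
  refine Finset.sum_congr rfl fun τ hτ => ?_
  rw [permMap_apply_apply, permMap_apply_apply, permsOn_commute hd hσ hτ]

theorem permMap_altOn_comm {a b : Finset (Fin n)} (hd : Disjoint a b)
    {σ : Equiv.Perm (Fin n)} (hσ : σ ∈ permsOn n a) (x : TP F H n) :
    permMap F H n σ (altOn F H n b x) = altOn F H n b (permMap F H n σ x) := by
  simp only [altOn, LinearMap.smul_apply, LinearMap.sum_apply, map_smul, map_sum, lm_zsmul_apply, map_zsmul]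
  congr 1
  refine Finset.sum_congr rfl fun τ hτ => ?_
  rw [permMap_apply_apply, permMap_apply_apply, permsOn_commute hd hσ hτ]

theorem factorial_cast_ne_zero (m : ℕ) : ((m.factorial : F)) ≠ 0 :=
  Nat.cast_ne_zero.2 m.factorial_ne_zero

/-- A vector fixed (up to sign) by all permutations of `a` is fixed by `symOn a`. -/
theorem symOn_fixed {a : Finset (Fin n)} {v : TP F H n}
    (hv : ∀ σ ∈ permsOn n a, permMap F H n σ v = v) : symOn F H n a v = v := by
  simp only [symOn, LinearMap.smul_apply, LinearMap.sum_apply]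
  rw [Finset.sum_congr rfl hv, Finset.sum_const, card_permsOn,
    ← Nat.cast_smul_eq_nsmul F, smul_smul, inv_mul_cancel₀ (factorial_cast_ne_zero _), one_smul]

theorem altOn_fixed {a : Finset (Fin n)} {v : TP F H n}
    (hv : ∀ σ ∈ permsOn n a, permMap F H n σ v = (Equiv.Perm.sign σ : ℤ) • v) :
    altOn F H n a v = v := by
  simp only [altOn, LinearMap.smul_apply, LinearMap.sum_apply, lm_zsmul_apply]
  have : ∀ σ ∈ permsOn n a,
      (Equiv.Perm.sign σ : ℤ) • permMap F H n σ v = v := fun σ hσ => by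
    rw [hv σ hσ, smul_smul, ← Units.val_mul, Int.units_mul_self, Units.val_one, one_smul]
  rw [Finset.sum_congr rfl this, Finset.sum_const, card_permsOn,
    ← Nat.cast_smul_eq_nsmul F, smul_smul, inv_mul_cancel₀ (factorial_cast_ne_zero _), one_smul]

/-- Coset decomposition of the skew-symmetriser over `insert c a`, applied to a vector that is
already alternating over `a`. -/
theorem altOn_insert {a : Finset (Fin n)} {c : Fin n} (hc : c ∉ a) {v : TP F H n}
    (hv : ∀ σ ∈ permsOn n a, permMap F H n σ v = (Equiv.Perm.sign σ : ℤ) • v) :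
    altOn F H n (insert c a) v
      = ((a.card + 1 : F))⁻¹ • (v - ∑ i ∈ a, permMap F H n (Equiv.swap c i) v) := by
  classical
  have key : ∑ σ ∈ permsOn n (insert c a), (Equiv.Perm.sign σ : ℤ) • permMap F H n σ v
      = ∑ p ∈ (insert c a) ×ˢ permsOn n a,
          (Equiv.Perm.sign (Equiv.swap c p.1 * p.2) : ℤ)
            • permMap F H n (Equiv.swap c p.1 * p.2) v := by
    refine Finset.sum_nbij' (fun σ => ((σ c : Fin n), Equiv.swap c (σ c) * σ))
      (fun p => Equiv.swap c p.1 * p.2) ?_ ?_ ?_ ?_ ?_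
    · -- forward maps into product set
      intro σ hσ
      refine Finset.mem_product.2 ⟨permsOn_apply_mem hσ (Finset.mem_insert_self c a), ?_⟩
      refine mem_permsOn.2 fun i hi => ?_
      by_cases hic : i = c
      · subst hic
        simp [Equiv.Perm.mul_apply, mem_permsOn]
      · have hins : i ∉ insert c a := by
          simp only [Finset.mem_insert, not_or]
          exact ⟨hic, hi⟩
        have h1 : σ i = i := mem_permsOn.1 hσ i hins
        have h2 : i ≠ σ c := by
          intro h
          have : σ i = σ c := by rw [h1, h]
          have := σ.injective this
          exact hins (this ▸ Finset.mem_insert_self c a)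
        simp [Equiv.Perm.mul_apply, h1, Equiv.swap_apply_of_ne_of_ne hic h2]
    · -- backward maps into permsOn (insert c a)
      intro p hp
      obtain ⟨hp1, hp2⟩ := Finset.mem_product.1 hp
      refine mem_permsOn.2 fun i hi => ?_
      have hia : i ∉ a := fun h => hi (Finset.mem_insert_of_mem h)
      have hic : i ≠ c := fun h => hi (h ▸ Finset.mem_insert_self c a)
      have hip : i ≠ p.1 := fun h => hi (h ▸ hp1)
      simp [Equiv.Perm.mul_apply, mem_permsOn.1 hp2 i hia,
        Equiv.swap_apply_of_ne_of_ne hic hip]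
    · -- left inverse
      intro σ hσ
      simp only
      rw [← mul_assoc, Equiv.swap_mul_self, one_mul]
    · -- right inverse
      intro p hp
      obtain ⟨hp1, hp2⟩ := Finset.mem_product.1 hp
      have hc' : p.2 c = c := mem_permsOn.1 hp2 c hc
      have happ : (Equiv.swap c p.1 * p.2) c = p.1 := by
        simp [Equiv.Perm.mul_apply, hc']
      rw [happ, ← mul_assoc, Equiv.swap_mul_self, one_mul]
    · intro σ hσ
      simp only
      rw [← mul_assoc, Equiv.swap_mul_self, one_mul]
  rw [altOn, LinearMap.smul_apply, LinearMap.sum_apply]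
  simp only [LinearMap.smul_apply, lm_zsmul_apply]
  have card_ins : (insert c a).card = a.card + 1 := Finset.card_insert_of_notMem hc
  have sumform : ∑ σ ∈ permsOn n (insert c a), (Equiv.Perm.sign σ : ℤ) • permMap F H n σ v
      = (a.card.factorial : F) • (v - ∑ i ∈ a, permMap F H n (Equiv.swap c i) v) := by
    rw [key, Finset.sum_product]
    have inner : ∀ i ∈ insert c a,
        ∑ τ ∈ permsOn n a, (Equiv.Perm.sign (Equiv.swap c i * τ) : ℤ)
            • permMap F H n (Equiv.swap c i * τ) v
        = (a.card.factorial : F) •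
            ((Equiv.Perm.sign (Equiv.swap c i) : ℤ) • permMap F H n (Equiv.swap c i) v) := by
      intro i _
      have hterm : ∀ τ ∈ permsOn n a,
          (Equiv.Perm.sign (Equiv.swap c i * τ) : ℤ) • permMap F H n (Equiv.swap c i * τ) v
          = (Equiv.Perm.sign (Equiv.swap c i) : ℤ) • permMap F H n (Equiv.swap c i) v := by
        intro τ hτ
        rw [← permMap_apply_apply, hv τ hτ, map_zsmul, map_mul, smul_smul, Units.val_mul,
          mul_assoc, ← Units.val_mul, Int.units_mul_self, Units.val_one, mul_one]
      rw [Finset.sum_congr rfl hterm, Finset.sum_const, card_permsOn,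
        ← Nat.cast_smul_eq_nsmul F]
    rw [Finset.sum_congr rfl inner, ← Finset.smul_sum, Finset.sum_insert hc]
    congr 1
    have hcc : Equiv.swap c c = 1 := Equiv.swap_self c
    rw [hcc]
    simp only [map_one, Units.val_one, one_smul, permMap_one]
    have : ∀ i ∈ a, (Equiv.Perm.sign (Equiv.swap c i) : ℤ) • permMap F H n (Equiv.swap c i) v
        = -(permMap F H n (Equiv.swap c i) v) := by
      intro i hi
      have hne : c ≠ i := fun h => hc (h ▸ hi)
      rw [Equiv.Perm.sign_swap hne]
      simp
    rw [Finset.sum_congr rfl this, Finset.sum_neg_distrib, ← sub_eq_add_neg]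
  rw [sumform, card_ins, smul_smul, Nat.factorial_succ]
  congr 1
  have h1 : ((a.card : F) + 1) ≠ 0 := by
    have h2 : ((a.card + 1 : ℕ) : F) ≠ 0 := Nat.cast_ne_zero.2 (Nat.succ_ne_zero _)
    push_cast at h2
    exact h2
  have h3 : ((a.card.factorial : F)) ≠ 0 := factorial_cast_ne_zero _
  push_cast
  field_simp
  try ring

/-- Coset decomposition of the symmetriser over `insert c a`, applied to a vector that is
already symmetric over `a`. -/
theorem symOn_insert {a : Finset (Fin n)} {c : Fin n} (hc : c ∉ a) {v : TP F H n}
    (hv : ∀ σ ∈ permsOn n a, permMap F H n σ v = v) :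
    symOn F H n (insert c a) v
      = ((a.card + 1 : F))⁻¹ • (v + ∑ i ∈ a, permMap F H n (Equiv.swap c i) v) := by
  classical
  have key : ∑ σ ∈ permsOn n (insert c a), permMap F H n σ v
      = ∑ p ∈ (insert c a) ×ˢ permsOn n a, permMap F H n (Equiv.swap c p.1 * p.2) v := by
    refine Finset.sum_nbij' (fun σ => ((σ c : Fin n), Equiv.swap c (σ c) * σ))
      (fun p => Equiv.swap c p.1 * p.2) ?_ ?_ ?_ ?_ ?_
    · intro σ hσ
      refine Finset.mem_product.2 ⟨permsOn_apply_mem hσ (Finset.mem_insert_self c a), ?_⟩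
      refine mem_permsOn.2 fun i hi => ?_
      by_cases hic : i = c
      · subst hic
        simp [Equiv.Perm.mul_apply]
      · have hins : i ∉ insert c a := by
          simp only [Finset.mem_insert, not_or]
          exact ⟨hic, hi⟩
        have h1 : σ i = i := mem_permsOn.1 hσ i hins
        have h2 : i ≠ σ c := by
          intro h
          have : σ i = σ c := by rw [h1, h]
          have := σ.injective this
          exact hins (this ▸ Finset.mem_insert_self c a)
        simp [Equiv.Perm.mul_apply, h1, Equiv.swap_apply_of_ne_of_ne hic h2]
    · intro p hp
      obtain ⟨hp1, hp2⟩ := Finset.mem_product.1 hp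
      refine mem_permsOn.2 fun i hi => ?_
      have hia : i ∉ a := fun h => hi (Finset.mem_insert_of_mem h)
      have hic : i ≠ c := fun h => hi (h ▸ Finset.mem_insert_self c a)
      have hip : i ≠ p.1 := fun h => hi (h ▸ hp1)
      simp [Equiv.Perm.mul_apply, mem_permsOn.1 hp2 i hia,
        Equiv.swap_apply_of_ne_of_ne hic hip]
    · intro σ hσ
      simp only
      rw [← mul_assoc, Equiv.swap_mul_self, one_mul]
    · intro p hp
      obtain ⟨hp1, hp2⟩ := Finset.mem_product.1 hp
      have hc' : p.2 c = c := mem_permsOn.1 hp2 c hc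
      have happ : (Equiv.swap c p.1 * p.2) c = p.1 := by
        simp [Equiv.Perm.mul_apply, hc']
      rw [happ, ← mul_assoc, Equiv.swap_mul_self, one_mul]
    · intro σ hσ
      simp only
      rw [← mul_assoc, Equiv.swap_mul_self, one_mul]
  rw [symOn, LinearMap.smul_apply, LinearMap.sum_apply]
  have card_ins : (insert c a).card = a.card + 1 := Finset.card_insert_of_notMem hc
  have sumform : ∑ σ ∈ permsOn n (insert c a), permMap F H n σ v
      = (a.card.factorial : F) • (v + ∑ i ∈ a, permMap F H n (Equiv.swap c i) v) := by
    rw [key, Finset.sum_product]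
    have inner : ∀ i ∈ insert c a,
        ∑ τ ∈ permsOn n a, permMap F H n (Equiv.swap c i * τ) v
        = (a.card.factorial : F) • permMap F H n (Equiv.swap c i) v := by
      intro i _
      have hterm : ∀ τ ∈ permsOn n a,
          permMap F H n (Equiv.swap c i * τ) v = permMap F H n (Equiv.swap c i) v := by
        intro τ hτ
        rw [← permMap_apply_apply, hv τ hτ]
      rw [Finset.sum_congr rfl hterm, Finset.sum_const, card_permsOn,
        ← Nat.cast_smul_eq_nsmul F]
    rw [Finset.sum_congr rfl inner, ← Finset.smul_sum, Finset.sum_insert hc]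
    congr 1
    have hcc : Equiv.swap c c = 1 := Equiv.swap_self c
    rw [hcc, permMap_one]
  rw [sumform, card_ins, smul_smul, Nat.factorial_succ]
  congr 1
  have h1 : ((a.card : F) + 1) ≠ 0 := by
    have h2 : ((a.card + 1 : ℕ) : F) ≠ 0 := Nat.cast_ne_zero.2 (Nat.succ_ne_zero _)
    push_cast at h2
    exact h2
  have h3 : ((a.card.factorial : F)) ≠ 0 := factorial_cast_ne_zero _
  push_cast
  field_simp
  try ring

end Aux8

/-- For all natural numbers `k ≥ 1` and `q ≥ 1` with `n = k + q`, the kernels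
of `d̆_q : H_{k,q} → H_{k-1,q+1}` and `d̆*_{q-1} : H_{k,q} → H_{k+1,q-1}` intersect
trivially. -/
theorem ker_dOp_inter_ker_dStarOp (k q : ℕ) (hk : 1 ≤ k) (hq : 1 ≤ q) :
    ∀ v ∈ Hmix F H (k + q) k,
      dOp F H (k + q) (q + 1) v = 0 → dStarOp F H (k + q) (k + 1) v = 0 → v = 0 := by
  classical
  intro v hv hdO hdS
  have hkn : k ≤ k + q := by omega
  have hqn : q ≤ k + q := by omega
  -- basic facts about the index sets
  have hcompl : (firstSet (k + q) k)ᶜ = lastSet (k + q) q := by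
    ext i
    simp only [Finset.mem_compl, firstSet, lastSet, Finset.mem_filter, Finset.mem_univ,
      true_and, not_lt]
    omega
  have hdisj : Disjoint (firstSet (k + q) k) (lastSet (k + q) q) := by
    rw [Finset.disjoint_left]
    intro i hi1 hi2
    simp only [firstSet, lastSet, Finset.mem_filter, Finset.mem_univ, true_and] at hi1 hi2
    omega
  -- the distinguished positions
  have hkpos : k - 1 < k + q := by omega
  have hkn' : k < k + q := by omega
  set c : Fin (k + q) := ⟨k - 1, hkpos⟩ with hcdef
  set d : Fin (k + q) := ⟨k, hkn'⟩ with hddef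
  have hc_first : c ∈ firstSet (k + q) k := by
    simp only [firstSet, Finset.mem_filter, Finset.mem_univ, true_and, hcdef, Fin.val_mk]
    omega
  have hc_not_last : c ∉ lastSet (k + q) q := by
    simp only [lastSet, Finset.mem_filter, Finset.mem_univ, true_and, hcdef, Fin.val_mk, not_le]
    omega
  have hd_last : d ∈ lastSet (k + q) q := by
    simp only [lastSet, Finset.mem_filter, Finset.mem_univ, true_and, hddef, Fin.val_mk]
    omega
  have hd_not_first : d ∉ firstSet (k + q) k := by
    simp only [firstSet, Finset.mem_filter, Finset.mem_univ, true_and, hddef, Fin.val_mk, not_lt]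
    omega
  have hlast_ins : lastSet (k + q) (q + 1) = insert c (lastSet (k + q) q) := by
    ext i
    simp only [lastSet, Finset.mem_filter, Finset.mem_univ, true_and, Finset.mem_insert,
      hcdef, Fin.ext_iff]
    omega
  have hfirst_ins : firstSet (k + q) (k + 1) = insert d (firstSet (k + q) k) := by
    ext i
    simp only [firstSet, Finset.mem_filter, Finset.mem_univ, true_and, Finset.mem_insert,
      hddef, Fin.ext_iff]
    omega
  -- v is symmetric in the first k positions and alternating in the last q positions
  rw [Hmix, Hgen] at hv
  obtain ⟨w, hw⟩ := hv
  rw [hcompl] at hw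
  simp only [LinearMap.comp_apply] at hw
  have hsymv : ∀ σ ∈ permsOn (k + q) (firstSet (k + q) k), permMap F H (k + q) σ v = v := by
    intro σ hσ
    rw [← hw]
    exact Aux8.permMap_symOn hσ _
  have haltv : ∀ τ ∈ permsOn (k + q) (lastSet (k + q) q),
      permMap F H (k + q) τ v = (Equiv.Perm.sign τ : ℤ) • v := by
    intro τ hτ
    rw [← hw, Aux8.permMap_symOn_comm hdisj.symm hτ, Aux8.permMap_altOn hτ, map_zsmul]
  -- the projector P
  set P := symOn F H (k + q) (firstSet (k + q) k) ∘ₗ altOn F H (k + q) (lastSet (k + q) q) with hPdef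
  have hPfix : P v = v := by
    rw [hPdef, LinearMap.comp_apply, Aux8.altOn_fixed haltv, Aux8.symOn_fixed hsymv]
  have hPρ : ∀ ρ ∈ permsOn (k + q) (firstSet (k + q) k), ∀ y,
      P (permMap F H (k + q) ρ y) = P y := by
    intro ρ hρ y
    rw [hPdef, LinearMap.comp_apply, LinearMap.comp_apply,
      ← Aux8.permMap_altOn_comm hdisj hρ, Aux8.symOn_permMap hρ]
  have hPτ : ∀ τ ∈ permsOn (k + q) (lastSet (k + q) q), ∀ y,
      P (permMap F H (k + q) τ y) = (Equiv.Perm.sign τ : ℤ) • P y := by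
    intro τ hτ y
    rw [hPdef, LinearMap.comp_apply, LinearMap.comp_apply, Aux8.altOn_permMap hτ, map_zsmul]
  -- consequence of dOp v = 0
  simp only [dOp, LinearMap.smul_apply] at hdO
  have hq1 : ((q + 1 : ℕ) : F) ≠ 0 := Nat.cast_ne_zero.2 (Nat.succ_ne_zero q)
  have haltz : altOn F H (k + q) (lastSet (k + q) (q + 1)) v = 0 := by
    rcases smul_eq_zero.1 hdO with h | h
    · exact absurd (by exact_mod_cast h) hq1
    · exact h
  rw [hlast_ins, Aux8.altOn_insert hc_not_last haltv, Aux8.card_lastSet hqn] at haltz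
  have heq1 : v = ∑ i ∈ lastSet (k + q) q, permMap F H (k + q) (Equiv.swap c i) v := by
    rcases smul_eq_zero.1 haltz with h | h
    · exact absurd h (inv_ne_zero (by exact_mod_cast hq1))
    · exact sub_eq_zero.1 h
  -- consequence of dStarOp v = 0
  simp only [dStarOp, LinearMap.smul_apply] at hdS
  have hk1 : ((k + 1 : ℕ) : F) ≠ 0 := Nat.cast_ne_zero.2 (Nat.succ_ne_zero k)
  have hsymz : symOn F H (k + q) (firstSet (k + q) (k + 1)) v = 0 := by
    rcases smul_eq_zero.1 hdS with h | h
    · exact absurd (by exact_mod_cast h) hk1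
    · exact h
  rw [hfirst_ins, Aux8.symOn_insert hd_not_first hsymv, Aux8.card_firstSet hkn] at hsymz
  have heq2 : v = -∑ j ∈ firstSet (k + q) k, permMap F H (k + q) (Equiv.swap d j) v := by
    rcases smul_eq_zero.1 hsymz with h | h
    · exact absurd h (inv_ne_zero (by exact_mod_cast hk1))
    · exact eq_neg_of_add_eq_zero_left h
  -- conjugation identities
  have hCA : ∀ j ∈ firstSet (k + q) k, ∀ i ∈ lastSet (k + q) q,
      P (permMap F H (k + q) (Equiv.swap c i) v) = P (permMap F H (k + q) (Equiv.swap j i) v) := by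
    intro j hj i hi
    by_cases hjc : j = c
    · rw [hjc]
    · have hjk : (j : ℕ) < k := by
        simpa [firstSet] using hj
      have hik : k ≤ (i : ℕ) := by
        have := hi
        simp only [lastSet, Finset.mem_filter, Finset.mem_univ, true_and] at this
        omega
      have hij : i ≠ j := fun h => by rw [h] at hik; omega
      have hic : i ≠ c := fun h => by
        rw [h, hcdef] at hik
        simp at hik
        omega
      have hρ : Equiv.swap j c ∈ permsOn (k + q) (firstSet (k + q) k) :=
        Aux8.swap_mem_permsOn hj hc_first
      have hconj : Equiv.swap j i
          = Equiv.swap j c * Equiv.swap c i * Equiv.swap j c := by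
        have h0 := Equiv.swap_apply_apply (Equiv.swap j c) c i
        rw [Equiv.swap_apply_right, Equiv.swap_apply_of_ne_of_ne hij hic,
          Equiv.swap_inv] at h0
        exact h0
      rw [hconj, ← Aux8.permMap_apply_apply, ← Aux8.permMap_apply_apply, hsymv _ hρ,
        hPρ _ hρ]
  have hCB : ∀ j ∈ firstSet (k + q) k, ∀ i ∈ lastSet (k + q) q,
      P (permMap F H (k + q) (Equiv.swap d j) v) = P (permMap F H (k + q) (Equiv.swap j i) v) := by
    intro j hj i hi
    by_cases hid : i = d
    · rw [hid, Equiv.swap_comm]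
    · have hjk : (j : ℕ) < k := by simpa [firstSet] using hj
      have hik : k ≤ (i : ℕ) := by
        have := hi
        simp only [lastSet, Finset.mem_filter, Finset.mem_univ, true_and] at this
        omega
      have hjd : j ≠ d := fun h => by
        have h2 := congrArg Fin.val h
        have hdk : (d : ℕ) = k := rfl
        rw [hdk] at h2
        omega
      have hji : j ≠ i := fun h => by
        have h2 := congrArg Fin.val h
        omega
      have hρ : Equiv.swap d i ∈ permsOn (k + q) (lastSet (k + q) q) :=
        Aux8.swap_mem_permsOn hd_last hi
      have hsgn : Equiv.Perm.sign (Equiv.swap d i) = -1 :=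
        Equiv.Perm.sign_swap (fun h => hid h.symm)
      have hconj : Equiv.swap j i
          = Equiv.swap d i * Equiv.swap d j * Equiv.swap d i := by
        have h0 := Equiv.swap_apply_apply (Equiv.swap d i) d j
        rw [Equiv.swap_apply_left, Equiv.swap_apply_of_ne_of_ne hjd hji,
          Equiv.swap_inv] at h0
        rw [Equiv.swap_comm j i]
        exact h0
      rw [hconj, ← Aux8.permMap_apply_apply, ← Aux8.permMap_apply_apply, haltv _ hρ,
        map_zsmul, map_zsmul, map_zsmul, hPτ _ hρ, hsgn]
      rw [smul_smul]
      norm_num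
  -- combine
  have key1 : ∀ j ∈ firstSet (k + q) k,
      v = ∑ i ∈ lastSet (k + q) q, P (permMap F H (k + q) (Equiv.swap j i) v) := by
    intro j hj
    calc v = P v := hPfix.symm
      _ = P (∑ i ∈ lastSet (k + q) q, permMap F H (k + q) (Equiv.swap c i) v) := by rw [← heq1]
      _ = ∑ i ∈ lastSet (k + q) q, P (permMap F H (k + q) (Equiv.swap c i) v) := map_sum _ _ _
      _ = ∑ i ∈ lastSet (k + q) q, P (permMap F H (k + q) (Equiv.swap j i) v) :=
          Finset.sum_congr rfl fun i hi => hCA j hj i hi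
  have key2 : ∀ i ∈ lastSet (k + q) q,
      v = -∑ j ∈ firstSet (k + q) k, P (permMap F H (k + q) (Equiv.swap j i) v) := by
    intro i hi
    calc v = P v := hPfix.symm
      _ = P (-∑ j ∈ firstSet (k + q) k, permMap F H (k + q) (Equiv.swap d j) v) := by rw [← heq2]
      _ = -∑ j ∈ firstSet (k + q) k, P (permMap F H (k + q) (Equiv.swap d j) v) := by
          rw [map_neg, map_sum]
      _ = -∑ j ∈ firstSet (k + q) k, P (permMap F H (k + q) (Equiv.swap j i) v) := by
          rw [Finset.sum_congr rfl fun j hj => hCB j hj i hi]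
  have hkv : k • v = ∑ j ∈ firstSet (k + q) k, ∑ i ∈ lastSet (k + q) q,
      P (permMap F H (k + q) (Equiv.swap j i) v) := by
    calc k • v = ∑ _j ∈ firstSet (k + q) k, v := by
          rw [Finset.sum_const, Aux8.card_firstSet hkn]
      _ = _ := Finset.sum_congr rfl fun j hj => key1 j hj
  have hqv : q • v = -∑ j ∈ firstSet (k + q) k, ∑ i ∈ lastSet (k + q) q,
      P (permMap F H (k + q) (Equiv.swap j i) v) := by
    calc q • v = ∑ _i ∈ lastSet (k + q) q, v := by
          rw [Finset.sum_const, Aux8.card_lastSet hqn]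
      _ = ∑ i ∈ lastSet (k + q) q, -∑ j ∈ firstSet (k + q) k,
            P (permMap F H (k + q) (Equiv.swap j i) v) :=
          Finset.sum_congr rfl fun i hi => key2 i hi
      _ = -∑ i ∈ lastSet (k + q) q, ∑ j ∈ firstSet (k + q) k,
            P (permMap F H (k + q) (Equiv.swap j i) v) := by
          rw [Finset.sum_neg_distrib]
      _ = -∑ j ∈ firstSet (k + q) k, ∑ i ∈ lastSet (k + q) q,
            P (permMap F H (k + q) (Equiv.swap j i) v) := by
          rw [Finset.sum_comm]
  have hzero : (k + q) • v = 0 := by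
    rw [add_nsmul, hkv, hqv, add_neg_cancel]
  have hzero' : ((k + q : ℕ) : F) • v = 0 := by
    rw [Nat.cast_smul_eq_nsmul]
    exact hzero
  rcases smul_eq_zero.1 hzero' with h | h
  · exact absurd h (Nat.cast_ne_zero.2 (by omega))
  · exact h

end
end

section
/- (Characterization of co-exact elements) For all natural numbers k ≥ 1 and q ≥ 1 with n = k + q, the three subspaces of H_{k,q} coincide: H_{k,q}^− = ker(d̆*_{q−1} : H_{k,q} → H_{k+1,q−1}) = im(d̆*_q : H_{k−1,q+1} → H_{k,q}). -/
open scoped BigOperators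

noncomputable section
set_option linter.unusedSectionVars false
set_option linter.unusedTactic false
set_option maxHeartbeats 1000000

variable (F : Type*) [Field F] [CharZero F] (H : Type*) [AddCommGroup H] [Module F H]

/-! ### Auxiliary lemmas -/

/-- The sign of a permutation as an element of `F`. -/
def sgn {n : ℕ} (σ : Equiv.Perm (Fin n)) : F := ((Equiv.Perm.sign σ : ℤ) : F)

section Aux

variable {n : ℕ}

lemma sgn_mul (σ τ : Equiv.Perm (Fin n)) : sgn F (σ * τ) = sgn F σ * sgn F τ := by
  simp [sgn, map_mul]

lemma sgn_one : sgn F (1 : Equiv.Perm (Fin n)) = 1 := by simp [sgn]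

lemma sgn_sq (σ : Equiv.Perm (Fin n)) : sgn F σ * sgn F σ = 1 := by
  rw [← sgn_mul]
  have h : Equiv.Perm.sign σ * Equiv.Perm.sign σ = 1 := Int.units_mul_self _
  simp [sgn, map_mul, h]

lemma sgn_swap {i j : Fin n} (h : i ≠ j) : sgn F (Equiv.swap i j) = -1 := by
  simp [sgn, Equiv.Perm.sign_swap h]

lemma pm_one : permMap F H n 1 = 1 := by
  apply LinearMap.ext; intro x
  have h : (1 : Equiv.Perm (Fin n)) = Equiv.refl (Fin n) := rfl
  simp [permMap, h]

lemma pm_mul (σ τ : Equiv.Perm (Fin n)) :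
    permMap F H n (σ * τ) = permMap F H n σ * permMap F H n τ := by
  apply LinearMap.ext; intro x
  rw [Module.End.mul_apply]
  simp only [permMap, LinearEquiv.coe_coe]
  exact (PiTensorProduct.reindex_reindex τ σ x).symm

lemma altOn_eq (a : Finset (Fin n)) :
    altOn F H n a = (a.card.factorial : F)⁻¹ • ∑ σ ∈ permsOn n a, sgn F σ • permMap F H n σ := by
  rw [altOn]
  congr 1

lemma mem_permsOn {a : Finset (Fin n)} {σ : Equiv.Perm (Fin n)} :
    σ ∈ permsOn n a ↔ ∀ i ∉ a, σ i = i := by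
  simp [permsOn]

lemma permsOn_one {a : Finset (Fin n)} : (1 : Equiv.Perm (Fin n)) ∈ permsOn n a := by
  simp [mem_permsOn]

lemma permsOn_mul {a : Finset (Fin n)} {σ τ : Equiv.Perm (Fin n)}
    (hσ : σ ∈ permsOn n a) (hτ : τ ∈ permsOn n a) : σ * τ ∈ permsOn n a := by
  rw [mem_permsOn] at *
  intro i hi
  simp [Equiv.Perm.mul_apply, hτ i hi, hσ i hi]

lemma permsOn_inv {a : Finset (Fin n)} {σ : Equiv.Perm (Fin n)}
    (hσ : σ ∈ permsOn n a) : σ⁻¹ ∈ permsOn n a := by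
  rw [mem_permsOn] at *
  intro i hi
  have := hσ i hi
  conv_lhs => rw [← this]
  simp

lemma permsOn_maps {a : Finset (Fin n)} {σ : Equiv.Perm (Fin n)}
    (hσ : σ ∈ permsOn n a) {i : Fin n} (hi : i ∈ a) : σ i ∈ a := by
  rw [mem_permsOn] at hσ
  by_contra h
  have h2 : σ (σ i) = σ i := hσ _ h
  have h3 : σ i = i := σ.injective h2
  exact h (by rwa [h3])

lemma permsOn_mono {a b : Finset (Fin n)} (hab : a ⊆ b) : permsOn n a ⊆ permsOn n b := by
  intro σ hσ
  rw [mem_permsOn] at *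
  intro i hi
  exact hσ i (fun h => hi (hab h))

lemma swap_mem_permsOn {a : Finset (Fin n)} {i j : Fin n} (hi : i ∈ a) (hj : j ∈ a) :
    Equiv.swap i j ∈ permsOn n a := by
  rw [mem_permsOn]
  intro l hl
  exact Equiv.swap_apply_of_ne_of_ne (fun h => hl (h ▸ hi)) (fun h => hl (h ▸ hj))

lemma card_permsOn (a : Finset (Fin n)) : (permsOn n a).card = a.card.factorial := by
  classical
  have himg : permsOn n a = Finset.univ.image
      (Equiv.Perm.ofSubtype : Equiv.Perm {x : Fin n // x ∈ a} →* Equiv.Perm (Fin n)) := by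
    ext σ
    simp only [Finset.mem_image, Finset.mem_univ, true_and, mem_permsOn]
    constructor
    · intro h
      refine ⟨σ.subtypePerm (fun x => ?_), ?_⟩
      · constructor
        · intro hx
          by_contra hx'
          have := h _ hx'
          rw [this] at hx
          exact hx' hx
        · intro hx; exact permsOn_maps (a := a) (mem_permsOn.2 h) hx
      · apply Equiv.Perm.ofSubtype_subtypePerm
        intro x hx
        by_contra hx'
        exact hx (h x hx')
    · rintro ⟨τ, rfl⟩ i hi
      exact Equiv.Perm.ofSubtype_apply_of_not_mem τ hi
  have hinj : Function.Injective
      (Equiv.Perm.ofSubtype : Equiv.Perm {x : Fin n // x ∈ a} →* Equiv.Perm (Fin n)) := by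
    intro τ τ' h
    ext x
    have h1 : (Equiv.Perm.ofSubtype τ) x.1 = (Equiv.Perm.ofSubtype τ') x.1 := by rw [h]
    rw [Equiv.Perm.ofSubtype_apply_of_mem τ x.2, Equiv.Perm.ofSubtype_apply_of_mem τ' x.2] at h1
    exact congrArg Fin.val (by simpa using h1)
  rw [himg, Finset.card_image_of_injective _ hinj, Finset.card_univ,
    Fintype.card_perm, Fintype.card_coe]

lemma factorial_cast_ne_zero (m : ℕ) : ((m.factorial : F)) ≠ 0 := by
  exact_mod_cast Nat.cast_ne_zero.mpr m.factorial_ne_zero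

lemma sum_permsOn_mulRight {M : Type*} [AddCommMonoid M] {a : Finset (Fin n)}
    {σ : Equiv.Perm (Fin n)} (hσ : σ ∈ permsOn n a) (f : Equiv.Perm (Fin n) → M) :
    ∑ τ ∈ permsOn n a, f (τ * σ) = ∑ τ ∈ permsOn n a, f τ := by
  refine Finset.sum_nbij' (fun τ => τ * σ) (fun τ => τ * σ⁻¹) ?_ ?_ ?_ ?_ ?_
  · intro τ hτ; exact permsOn_mul hτ hσ
  · intro τ hτ; exact permsOn_mul hτ (permsOn_inv hσ)
  · intro τ _; group
  · intro τ _; group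
  · intro τ _; rfl

lemma sum_permsOn_mulLeft {M : Type*} [AddCommMonoid M] {a : Finset (Fin n)}
    {σ : Equiv.Perm (Fin n)} (hσ : σ ∈ permsOn n a) (f : Equiv.Perm (Fin n) → M) :
    ∑ τ ∈ permsOn n a, f (σ * τ) = ∑ τ ∈ permsOn n a, f τ := by
  refine Finset.sum_nbij' (fun τ => σ * τ) (fun τ => σ⁻¹ * τ) ?_ ?_ ?_ ?_ ?_
  · intro τ hτ; exact permsOn_mul hσ hτ
  · intro τ hτ; exact permsOn_mul (permsOn_inv hσ) hτ
  · intro τ _; group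
  · intro τ _; group
  · intro τ _; rfl

lemma sym_mul_pm {a : Finset (Fin n)} {σ : Equiv.Perm (Fin n)} (hσ : σ ∈ permsOn n a) :
    symOn F H n a * permMap F H n σ = symOn F H n a := by
  rw [symOn, smul_mul_assoc, Finset.sum_mul]
  congr 1
  calc ∑ τ ∈ permsOn n a, permMap F H n τ * permMap F H n σ
      = ∑ τ ∈ permsOn n a, permMap F H n (τ * σ) := by
        simp_rw [pm_mul]
    _ = ∑ τ ∈ permsOn n a, permMap F H n τ := sum_permsOn_mulRight hσ _

lemma pm_mul_sym {a : Finset (Fin n)} {σ : Equiv.Perm (Fin n)} (hσ : σ ∈ permsOn n a) :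
    permMap F H n σ * symOn F H n a = symOn F H n a := by
  rw [symOn, mul_smul_comm, Finset.mul_sum]
  congr 1
  calc ∑ τ ∈ permsOn n a, permMap F H n σ * permMap F H n τ
      = ∑ τ ∈ permsOn n a, permMap F H n (σ * τ) := by
        simp_rw [pm_mul]
    _ = ∑ τ ∈ permsOn n a, permMap F H n τ := sum_permsOn_mulLeft hσ _

lemma sgn_mul_cancel_left (σ τ : Equiv.Perm (Fin n)) :
    sgn F σ * sgn F (τ * σ) = sgn F τ := by
  rw [sgn_mul, mul_comm (sgn F τ) (sgn F σ), ← mul_assoc, sgn_sq, one_mul]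

lemma sgn_mul_cancel_right (σ τ : Equiv.Perm (Fin n)) :
    sgn F σ * sgn F (σ * τ) = sgn F τ := by
  rw [sgn_mul, ← mul_assoc, sgn_sq, one_mul]

lemma alt_mul_pm {a : Finset (Fin n)} {σ : Equiv.Perm (Fin n)} (hσ : σ ∈ permsOn n a) :
    altOn F H n a * permMap F H n σ = sgn F σ • altOn F H n a := by
  rw [altOn_eq]
  calc ((a.card.factorial : F)⁻¹ • ∑ τ ∈ permsOn n a, sgn F τ • permMap F H n τ)
        * permMap F H n σ
      = (a.card.factorial : F)⁻¹ •
          ∑ τ ∈ permsOn n a, sgn F τ • permMap F H n (τ * σ) := by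
        rw [smul_mul_assoc, Finset.sum_mul]
        congr 1
        refine Finset.sum_congr rfl (fun τ _ => ?_)
        rw [smul_mul_assoc, ← pm_mul]
    _ = (a.card.factorial : F)⁻¹ •
          (sgn F σ • ∑ τ ∈ permsOn n a, sgn F τ • permMap F H n τ) := by
        congr 1
        calc ∑ τ ∈ permsOn n a, sgn F τ • permMap F H n (τ * σ)
            = ∑ τ ∈ permsOn n a, sgn F σ • (sgn F (τ * σ) • permMap F H n (τ * σ)) := by
              refine Finset.sum_congr rfl (fun τ _ => ?_)
              rw [smul_smul, sgn_mul_cancel_left]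
          _ = sgn F σ • ∑ τ ∈ permsOn n a, sgn F (τ * σ) • permMap F H n (τ * σ) :=
              (Finset.smul_sum).symm
          _ = sgn F σ • ∑ τ ∈ permsOn n a, sgn F τ • permMap F H n τ := by
              rw [sum_permsOn_mulRight hσ (fun τ => sgn F τ • permMap F H n τ)]
    _ = sgn F σ • ((a.card.factorial : F)⁻¹ •
          ∑ τ ∈ permsOn n a, sgn F τ • permMap F H n τ) := smul_comm _ _ _
    _ = sgn F σ • altOn F H n a := by rw [← altOn_eq]

lemma pm_mul_alt {a : Finset (Fin n)} {σ : Equiv.Perm (Fin n)} (hσ : σ ∈ permsOn n a) :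
    permMap F H n σ * altOn F H n a = sgn F σ • altOn F H n a := by
  rw [altOn_eq]
  calc permMap F H n σ *
        ((a.card.factorial : F)⁻¹ • ∑ τ ∈ permsOn n a, sgn F τ • permMap F H n τ)
      = (a.card.factorial : F)⁻¹ •
          ∑ τ ∈ permsOn n a, sgn F τ • permMap F H n (σ * τ) := by
        rw [mul_smul_comm, Finset.mul_sum]
        congr 1
        refine Finset.sum_congr rfl (fun τ _ => ?_)
        rw [mul_smul_comm, ← pm_mul]
    _ = (a.card.factorial : F)⁻¹ •
          (sgn F σ • ∑ τ ∈ permsOn n a, sgn F τ • permMap F H n τ) := by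
        congr 1
        calc ∑ τ ∈ permsOn n a, sgn F τ • permMap F H n (σ * τ)
            = ∑ τ ∈ permsOn n a, sgn F σ • (sgn F (σ * τ) • permMap F H n (σ * τ)) := by
              refine Finset.sum_congr rfl (fun τ _ => ?_)
              rw [smul_smul, sgn_mul_cancel_right]
          _ = sgn F σ • ∑ τ ∈ permsOn n a, sgn F (σ * τ) • permMap F H n (σ * τ) :=
              (Finset.smul_sum).symm
          _ = sgn F σ • ∑ τ ∈ permsOn n a, sgn F τ • permMap F H n τ := by
              rw [sum_permsOn_mulLeft hσ (fun τ => sgn F τ • permMap F H n τ)]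
    _ = sgn F σ • ((a.card.factorial : F)⁻¹ •
          ∑ τ ∈ permsOn n a, sgn F τ • permMap F H n τ) := smul_comm _ _ _
    _ = sgn F σ • altOn F H n a := by rw [← altOn_eq]

lemma symOn_def (a : Finset (Fin n)) :
    symOn F H n a = (a.card.factorial : F)⁻¹ • ∑ σ ∈ permsOn n a, permMap F H n σ := rfl

lemma sum_permsOn_pm (a : Finset (Fin n)) :
    ∑ τ ∈ permsOn n a, permMap F H n τ = (a.card.factorial : F) • symOn F H n a := by
  rw [symOn, smul_inv_smul₀ (factorial_cast_ne_zero F _)]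

lemma sum_permsOn_sgn_pm (a : Finset (Fin n)) :
    ∑ τ ∈ permsOn n a, sgn F τ • permMap F H n τ = (a.card.factorial : F) • altOn F H n a := by
  rw [altOn_eq, smul_inv_smul₀ (factorial_cast_ne_zero F _)]

lemma sym_mul_sym {a b : Finset (Fin n)} (hba : b ⊆ a) :
    symOn F H n a * symOn F H n b = symOn F H n a := by
  rw [symOn_def F H b, mul_smul_comm, Finset.mul_sum]
  have h1 : ∀ τ ∈ permsOn n b, symOn F H n a * permMap F H n τ = symOn F H n a :=
    fun τ hτ => sym_mul_pm F H (permsOn_mono hba hτ)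
  rw [Finset.sum_congr rfl h1, Finset.sum_const, card_permsOn,
    ← Nat.cast_smul_eq_nsmul F, smul_smul, inv_mul_cancel₀ (factorial_cast_ne_zero F _), one_smul]

lemma sym_mul_sym' {a b : Finset (Fin n)} (hba : b ⊆ a) :
    symOn F H n b * symOn F H n a = symOn F H n a := by
  rw [symOn_def F H b, smul_mul_assoc, Finset.sum_mul]
  have h1 : ∀ τ ∈ permsOn n b, permMap F H n τ * symOn F H n a = symOn F H n a :=
    fun τ hτ => pm_mul_sym F H (permsOn_mono hba hτ)
  rw [Finset.sum_congr rfl h1, Finset.sum_const, card_permsOn,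
    ← Nat.cast_smul_eq_nsmul F, smul_smul, inv_mul_cancel₀ (factorial_cast_ne_zero F _), one_smul]

lemma alt_mul_alt {a b : Finset (Fin n)} (hba : b ⊆ a) :
    altOn F H n a * altOn F H n b = altOn F H n a := by
  rw [altOn_eq F H b, mul_smul_comm, Finset.mul_sum]
  have h1 : ∀ τ ∈ permsOn n b,
      altOn F H n a * (sgn F τ • permMap F H n τ) = altOn F H n a := by
    intro τ hτ
    rw [mul_smul_comm, alt_mul_pm F H (permsOn_mono hba hτ), smul_smul, sgn_sq, one_smul]
  rw [Finset.sum_congr rfl h1, Finset.sum_const, card_permsOn,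
    ← Nat.cast_smul_eq_nsmul F, smul_smul, inv_mul_cancel₀ (factorial_cast_ne_zero F _), one_smul]

lemma alt_mul_alt' {a b : Finset (Fin n)} (hba : b ⊆ a) :
    altOn F H n b * altOn F H n a = altOn F H n a := by
  rw [altOn_eq F H b, smul_mul_assoc, Finset.sum_mul]
  have h1 : ∀ τ ∈ permsOn n b,
      (sgn F τ • permMap F H n τ) * altOn F H n a = altOn F H n a := by
    intro τ hτ
    rw [smul_mul_assoc, pm_mul_alt F H (permsOn_mono hba hτ), smul_smul, sgn_sq, one_smul]
  rw [Finset.sum_congr rfl h1, Finset.sum_const, card_permsOn,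
    ← Nat.cast_smul_eq_nsmul F, smul_smul, inv_mul_cancel₀ (factorial_cast_ne_zero F _), one_smul]

lemma sym_mul_alt_eq_zero {a b : Finset (Fin n)} {i j : Fin n} (hia : i ∈ a) (hib : i ∈ b)
    (hja : j ∈ a) (hjb : j ∈ b) (hij : i ≠ j) :
    symOn F H n a * altOn F H n b = 0 := by
  have h1 : symOn F H n a * permMap F H n (Equiv.swap i j) = symOn F H n a :=
    sym_mul_pm F H (swap_mem_permsOn hia hja)
  have h2 : permMap F H n (Equiv.swap i j) * altOn F H n b = sgn F (Equiv.swap i j) • altOn F H n b :=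
    pm_mul_alt F H (swap_mem_permsOn hib hjb)
  have h3 : symOn F H n a * altOn F H n b = -(symOn F H n a * altOn F H n b) := by
    calc symOn F H n a * altOn F H n b
        = symOn F H n a * (permMap F H n (Equiv.swap i j) * altOn F H n b) := by
          rw [← mul_assoc, h1]
      _ = symOn F H n a * ((-1 : F) • altOn F H n b) := by rw [h2, sgn_swap F hij]
      _ = -(symOn F H n a * altOn F H n b) := by
          rw [mul_smul_comm]
          exact neg_one_smul F (symOn F H n a * altOn F H n b)
  have h4 : (2 : F) • (symOn F H n a * altOn F H n b) = 0 := by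
    rw [two_smul]
    nth_rewrite 1 [h3]
    rw [neg_add_cancel]
  rcases smul_eq_zero.mp h4 with h | h
  · exact absurd h two_ne_zero
  · exact h

lemma disjoint_perm_comm {a b : Finset (Fin n)} (hab : Disjoint a b)
    {σ τ : Equiv.Perm (Fin n)} (hσ : σ ∈ permsOn n a) (hτ : τ ∈ permsOn n b) :
    σ * τ = τ * σ := by
  have hd := Finset.disjoint_left.mp hab
  ext i
  simp only [Equiv.Perm.mul_apply]
  by_cases hia : i ∈ a
  · have h1 : τ i = i := mem_permsOn.mp hτ i (fun h => hd hia h)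
    have h2 : σ i ∈ a := permsOn_maps hσ hia
    have h3 : τ (σ i) = σ i := mem_permsOn.mp hτ _ (fun h => hd h2 h)
    rw [h1, h3]
  · by_cases hib : i ∈ b
    · have h1 : σ i = i := mem_permsOn.mp hσ i hia
      have h2 : τ i ∈ b := permsOn_maps hτ hib
      have h3 : σ (τ i) = τ i := mem_permsOn.mp hσ _ (fun h => hd h h2)
      rw [h1, h3]
    · simp [mem_permsOn.mp hσ i hia, mem_permsOn.mp hτ i hib]

lemma pm_mul_sym_comm {a b : Finset (Fin n)} (hab : Disjoint a b)
    {σ : Equiv.Perm (Fin n)} (hσ : σ ∈ permsOn n b) :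
    permMap F H n σ * symOn F H n a = symOn F H n a * permMap F H n σ := by
  rw [symOn_def F H a, mul_smul_comm, smul_mul_assoc, Finset.mul_sum, Finset.sum_mul]
  congr 1
  refine Finset.sum_congr rfl (fun τ hτ => ?_)
  rw [← pm_mul, ← pm_mul, disjoint_perm_comm hab hτ hσ]

lemma pm_mul_alt_comm {a b : Finset (Fin n)} (hab : Disjoint a b)
    {σ : Equiv.Perm (Fin n)} (hσ : σ ∈ permsOn n b) :
    permMap F H n σ * altOn F H n a = altOn F H n a * permMap F H n σ := by
  rw [altOn_eq F H a, mul_smul_comm, smul_mul_assoc, Finset.mul_sum, Finset.sum_mul]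
  congr 1
  refine Finset.sum_congr rfl (fun τ hτ => ?_)
  rw [mul_smul_comm, smul_mul_assoc, ← pm_mul, ← pm_mul, disjoint_perm_comm hab hτ hσ]

lemma sym_mul_alt_comm {a b : Finset (Fin n)} (hab : Disjoint a b) :
    symOn F H n a * altOn F H n b = altOn F H n b * symOn F H n a := by
  rw [symOn_def F H a, smul_mul_assoc, mul_smul_comm, Finset.sum_mul, Finset.mul_sum]
  congr 1
  refine Finset.sum_congr rfl (fun τ hτ => ?_)
  exact pm_mul_alt_comm F H hab.symm hτ

lemma sum_permsOn_insert {M : Type*} [AddCommMonoid M] {b : Finset (Fin n)} {x : Fin n}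
    (hx : x ∉ b) (f : Equiv.Perm (Fin n) → M) :
    ∑ σ ∈ permsOn n (insert x b), f σ =
      ∑ j ∈ insert x b, ∑ τ ∈ permsOn n b, f (Equiv.swap x j * τ) := by
  rw [← Finset.sum_product']
  refine (Finset.sum_nbij' (fun (p : Fin n × Equiv.Perm (Fin n)) => Equiv.swap x p.1 * p.2)
    (fun σ => (σ x, Equiv.swap x (σ x) * σ)) ?_ ?_ ?_ ?_ ?_).symm
  · -- maps product into permsOn (insert x b)
    intro p hp
    rw [Finset.mem_product] at hp
    exact permsOn_mul (swap_mem_permsOn (Finset.mem_insert_self x b) hp.1)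
      (permsOn_mono (Finset.subset_insert x b) hp.2)
  · -- maps permsOn (insert x b) into product
    intro σ hσ
    rw [Finset.mem_product]
    refine ⟨permsOn_maps hσ (Finset.mem_insert_self x b), ?_⟩
    rw [mem_permsOn]
    intro i hi
    by_cases hix : i = x
    · subst hix
      simp [Equiv.Perm.mul_apply]
    · have hi' : i ∉ insert x b := by
        simp only [Finset.mem_insert, not_or]
        exact ⟨hix, hi⟩
      have h1 : σ i = i := mem_permsOn.mp hσ i hi'
      have h2 : i ≠ σ x := by
        intro hh
        apply hix
        exact σ.injective (by rw [h1, hh])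
      simp only [Equiv.Perm.mul_apply, h1]
      exact Equiv.swap_apply_of_ne_of_ne hix h2
  · -- left inverse
    intro p hp
    rw [Finset.mem_product] at hp
    have hτx : p.2 x = x := mem_permsOn.mp hp.2 x hx
    have h1 : (Equiv.swap x p.1 * p.2) x = p.1 := by
      simp [Equiv.Perm.mul_apply, hτx]
    ext
    · simp [h1]
    · simp only [h1, ← mul_assoc, Equiv.swap_mul_self, one_mul]
  · -- right inverse
    intro σ hσ
    simp only [← mul_assoc, Equiv.swap_mul_self, one_mul]
  · intro p hp; rfl

lemma sym_insert {b : Finset (Fin n)} {x : Fin n} (hx : x ∉ b) :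
    ((b.card + 1 : ℕ) : F) • symOn F H n (insert x b) =
      ∑ j ∈ insert x b, permMap F H n (Equiv.swap x j) * symOn F H n b := by
  rw [symOn_def F H (insert x b), Finset.card_insert_of_notMem hx]
  rw [sum_permsOn_insert hx (permMap F H n)]
  have h1 : ∀ j ∈ insert x b, ∑ τ ∈ permsOn n b, permMap F H n (Equiv.swap x j * τ)
      = (b.card.factorial : F) • (permMap F H n (Equiv.swap x j) * symOn F H n b) := by
    intro j _
    simp_rw [pm_mul]
    rw [← Finset.mul_sum, sum_permsOn_pm, mul_smul_comm]
  rw [Finset.sum_congr rfl h1, ← Finset.smul_sum, smul_smul, smul_smul]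
  congr 1
  rw [Nat.factorial_succ]
  push_cast
  have hb : ((b.card.factorial : F)) ≠ 0 := factorial_cast_ne_zero F _
  have hb1 : ((b.card : F) + 1) ≠ 0 := by
    have : ((b.card + 1 : ℕ) : F) ≠ 0 := Nat.cast_ne_zero.mpr (Nat.succ_ne_zero _)
    push_cast at this
    exact this
  field_simp
  rw [one_smul]

lemma alt_insert {b : Finset (Fin n)} {x : Fin n} (hx : x ∉ b) :
    ((b.card + 1 : ℕ) : F) • altOn F H n (insert x b) =
      ∑ j ∈ insert x b, sgn F (Equiv.swap x j) • (permMap F H n (Equiv.swap x j) * altOn F H n b) := by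
  rw [altOn_eq F H (insert x b), Finset.card_insert_of_notMem hx]
  rw [sum_permsOn_insert hx (fun σ => sgn F σ • permMap F H n σ)]
  have h1 : ∀ j ∈ insert x b,
      ∑ τ ∈ permsOn n b, sgn F (Equiv.swap x j * τ) • permMap F H n (Equiv.swap x j * τ)
      = (b.card.factorial : F) •
          (sgn F (Equiv.swap x j) • (permMap F H n (Equiv.swap x j) * altOn F H n b)) := by
    intro j _
    have h2 : ∀ τ ∈ permsOn n b, sgn F (Equiv.swap x j * τ) • permMap F H n (Equiv.swap x j * τ)
        = sgn F (Equiv.swap x j) • (permMap F H n (Equiv.swap x j) * (sgn F τ • permMap F H n τ)) := by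
      intro τ _
      rw [pm_mul, sgn_mul, mul_smul_comm, smul_smul]
    rw [Finset.sum_congr rfl h2, ← Finset.smul_sum, ← Finset.mul_sum, sum_permsOn_sgn_pm,
      mul_smul_comm, smul_comm]
  rw [Finset.sum_congr rfl h1, ← Finset.smul_sum, smul_smul, smul_smul]
  congr 1
  rw [Nat.factorial_succ]
  push_cast
  have hb : ((b.card.factorial : F)) ≠ 0 := factorial_cast_ne_zero F _
  have hb1 : ((b.card : F) + 1) ≠ 0 := by
    have : ((b.card + 1 : ℕ) : F) ≠ 0 := Nat.cast_ne_zero.mpr (Nat.succ_ne_zero _)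
    push_cast at this
    exact this
  field_simp
  rw [one_smul]

lemma compl_image (σ : Equiv.Perm (Fin n)) (a : Finset (Fin n)) :
    (a.image σ)ᶜ = aᶜ.image σ := by
  ext i
  simp only [Finset.mem_compl, Finset.mem_image]
  constructor
  · intro h
    refine ⟨σ⁻¹ i, ?_, by simp⟩
    intro hmem
    exact h ⟨σ⁻¹ i, hmem, by simp⟩
  · rintro ⟨t, ht, rfl⟩ ⟨t', ht', hEq⟩
    exact ht (σ.injective hEq ▸ ht')

lemma sgn_conj (σ τ : Equiv.Perm (Fin n)) : sgn F (σ * τ * σ⁻¹) = sgn F τ := by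
  have h : Equiv.Perm.sign (σ * τ * σ⁻¹) = Equiv.Perm.sign τ := by
    rw [map_mul, map_mul, map_inv, mul_comm (Equiv.Perm.sign σ) (Equiv.Perm.sign τ), mul_assoc,
      mul_inv_cancel, mul_one]
  simp [sgn, h]

lemma mem_permsOn_image {a : Finset (Fin n)} (σ : Equiv.Perm (Fin n))
    {τ : Equiv.Perm (Fin n)} (hτ : τ ∈ permsOn n a) :
    σ * τ * σ⁻¹ ∈ permsOn n (a.image σ) := by
  rw [mem_permsOn]
  intro i hi
  have h1 : σ⁻¹ i ∉ a := by
    intro hmem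
    exact hi (Finset.mem_image.mpr ⟨σ⁻¹ i, hmem, by simp⟩)
  simp only [Equiv.Perm.mul_apply, mem_permsOn.mp hτ _ h1]
  exact σ.apply_symm_apply i

lemma pm_mul_sym_conj (σ : Equiv.Perm (Fin n)) (a : Finset (Fin n)) :
    permMap F H n σ * symOn F H n a = symOn F H n (a.image σ) * permMap F H n σ := by
  rw [symOn_def F H a, symOn_def F H (a.image σ),
    Finset.card_image_of_injective _ σ.injective,
    mul_smul_comm, smul_mul_assoc, Finset.mul_sum, Finset.sum_mul]
  congr 1
  refine Finset.sum_nbij' (fun τ => σ * τ * σ⁻¹) (fun τ' => σ⁻¹ * τ' * σ) ?_ ?_ ?_ ?_ ?_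
  · intro τ hτ; exact mem_permsOn_image σ hτ
  · intro τ' hτ'
    have h := mem_permsOn_image σ⁻¹ hτ'
    rw [inv_inv] at h
    have himg : Finset.image (⇑(σ⁻¹)) (Finset.image (⇑σ) a) = a := by
      rw [Finset.image_image]
      have hco : (⇑(σ⁻¹) ∘ ⇑σ : Fin n → Fin n) = id := by
        funext t; simp
      rw [hco, Finset.image_id]
    rwa [himg] at h
  · intro τ _; group
  · intro τ _; group
  · intro τ _
    rw [← pm_mul, ← pm_mul]
    congr 1
    group

lemma pm_mul_alt_conj (σ : Equiv.Perm (Fin n)) (a : Finset (Fin n)) :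
    permMap F H n σ * altOn F H n a = altOn F H n (a.image σ) * permMap F H n σ := by
  rw [altOn_eq F H a, altOn_eq F H (a.image σ),
    Finset.card_image_of_injective _ σ.injective,
    mul_smul_comm, smul_mul_assoc, Finset.mul_sum, Finset.sum_mul]
  congr 1
  refine Finset.sum_nbij' (fun τ => σ * τ * σ⁻¹) (fun τ' => σ⁻¹ * τ' * σ) ?_ ?_ ?_ ?_ ?_
  · intro τ hτ; exact mem_permsOn_image σ hτ
  · intro τ' hτ'
    have h := mem_permsOn_image σ⁻¹ hτ'
    rw [inv_inv] at h
    have himg : Finset.image (⇑(σ⁻¹)) (Finset.image (⇑σ) a) = a := by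
      rw [Finset.image_image]
      have hco : (⇑(σ⁻¹) ∘ ⇑σ : Fin n → Fin n) = id := by
        funext t; simp
      rw [hco, Finset.image_id]
    rwa [himg] at h
  · intro τ _; group
  · intro τ _; group
  · intro τ _
    rw [mul_smul_comm, smul_mul_assoc, ← pm_mul, ← pm_mul, sgn_conj]
    congr 2
    group

lemma mem_firstSet {j : ℕ} {i : Fin n} : i ∈ firstSet n j ↔ (i : ℕ) < j := by
  simp [firstSet]

lemma mem_compl_firstSet {j : ℕ} {i : Fin n} : i ∈ (firstSet n j)ᶜ ↔ j ≤ (i : ℕ) := by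
  simp [firstSet, Finset.mem_compl, Nat.not_lt]

lemma card_firstSet {j : ℕ} (h : j ≤ n) : (firstSet n j).card = j := by
  have himg : firstSet n j = Finset.image
      (fun i : Fin j => (⟨(i : ℕ), lt_of_lt_of_le i.isLt h⟩ : Fin n)) Finset.univ := by
    ext i
    simp only [mem_firstSet, Finset.mem_image, Finset.mem_univ, true_and]
    constructor
    · intro hi
      exact ⟨⟨(i : ℕ), hi⟩, by simp⟩
    · rintro ⟨i', rfl⟩
      exact i'.isLt
  rw [himg, Finset.card_image_of_injective, Finset.card_univ, Fintype.card_fin]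
  intro i i' hii
  apply Fin.ext
  simpa [Fin.ext_iff] using hii

lemma card_compl_firstSet {j : ℕ} (h : j ≤ n) : ((firstSet n j)ᶜ).card = n - j := by
  rw [Finset.card_compl, card_firstSet h, Fintype.card_fin]

lemma firstSet_mono {j j' : ℕ} (h : j ≤ j') : firstSet n j ⊆ firstSet n j' := by
  intro i hi
  rw [mem_firstSet] at *
  omega

lemma insert_firstSet {j : ℕ} (h : j < n) :
    insert (⟨j, h⟩ : Fin n) (firstSet n j) = firstSet n (j + 1) := by
  ext i
  simp only [Finset.mem_insert, mem_firstSet, Fin.ext_iff]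
  constructor
  · rintro (rfl | hi) <;> omega
  · intro hi
    by_cases hij : (i : ℕ) = j
    · left; exact hij
    · right; omega

lemma not_mem_firstSet {j : ℕ} (h : j < n) : (⟨j, h⟩ : Fin n) ∉ firstSet n j := by
  simp [mem_firstSet]

lemma insert_compl_firstSet {j : ℕ} (h : j < n) :
    insert (⟨j, h⟩ : Fin n) ((firstSet n (j + 1))ᶜ) = (firstSet n j)ᶜ := by
  ext i
  simp only [Finset.mem_insert, mem_compl_firstSet, Fin.ext_iff]
  constructor
  · rintro (rfl | hi) <;> omega
  · intro hi
    by_cases hij : (i : ℕ) = j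
    · left; exact hij
    · right; omega

lemma not_mem_compl_firstSet {j : ℕ} (h : j < n) :
    (⟨j, h⟩ : Fin n) ∉ (firstSet n (j + 1))ᶜ := by
  rw [mem_compl_firstSet, Fin.val_mk]
  omega

end Aux

/-- Characterization of co-exact elements: for `k ≥ 1`, `q ≥ 1`, `n = k + q`,
`H_{k,q}^- = ker(d̆*_{q-1} : H_{k,q} → H_{k+1,q-1}) = im(d̆*_q : H_{k-1,q+1} → H_{k,q})`,
where `H_{k,q}^- = H_{k,q} ∩ H^{⊙[k-1],∧[q+1]}`. -/
theorem coexact_characterization (k q : ℕ) (hk : 1 ≤ k) (hq : 1 ≤ q) :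
    Hmix F H (k + q) k ⊓ HmixSpan F H (k + q) (k - 1) =
      Hmix F H (k + q) k ⊓ LinearMap.ker (dStarOp F H (k + q) (k + 1)) ∧
    Hmix F H (k + q) k ⊓ LinearMap.ker (dStarOp F H (k + q) (k + 1)) =
      Submodule.map (dStarOp F H (k + q) k) (Hmix F H (k + q) (k - 1)) := by
  set n := k + q with hn
  have hk1n : k - 1 < n := by omega
  have hkn : k < n := by omega
  have hkn' : k ≤ n := by omega
  have hk1 : k - 1 + 1 = k := by omega
  -- the two distinguished positions
  set x : Fin n := ⟨k - 1, hk1n⟩ with hxdef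
  set y : Fin n := ⟨k, hkn⟩ with hydef
  -- the index sets
  set X1 := firstSet n (k - 1) with hX1
  set X2 := firstSet n k with hX2
  set X3 := firstSet n (k + 1) with hX3
  -- basic facts about the sets
  have f1 : insert x X1 = X2 := by
    have h := insert_firstSet (n := n) (j := k - 1) hk1n
    rwa [hk1] at h
  have f2 : insert y X2 = X3 := insert_firstSet (n := n) (j := k) hkn
  have f3 : insert x (X2ᶜ) = X1ᶜ := by
    have h := insert_compl_firstSet (n := n) (j := k - 1) hk1n
    rwa [hk1] at h
  have c1 : X1.card = k - 1 := card_firstSet (by omega)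
  have c2 : X2.card = k := card_firstSet (by omega)
  have c3 : X3.card = k + 1 := card_firstSet (by omega)
  have cB2 : (X2ᶜ).card = q := by
    rw [hX2, card_compl_firstSet hkn'] ; omega
  have cB1 : (X1ᶜ).card = q + 1 := by
    rw [hX1, card_compl_firstSet (by omega : k - 1 ≤ n)] ; omega
  have hxX2 : x ∈ X2 := by rw [hX2, mem_firstSet, hxdef] ; show k - 1 < k ; omega
  have hxX3 : x ∈ X3 := by rw [hX3, mem_firstSet, hxdef] ; show k - 1 < k + 1 ; omega
  have hyX3 : y ∈ X3 := by rw [hX3, mem_firstSet, hydef] ; show k < k + 1 ; omega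
  have hyB2 : y ∈ X2ᶜ := by rw [hX2, mem_compl_firstSet, hydef]
  have hxB1 : x ∈ X1ᶜ := by rw [hX1, mem_compl_firstSet, hxdef]
  have hyB1 : y ∈ X1ᶜ := by rw [hX1, mem_compl_firstSet, hydef] ; show k - 1 ≤ k ; omega
  have hxny : x ≠ y := by
    intro hcon
    have hcon2 : k - 1 = k := congrArg Fin.val hcon
    omega
  have hynX2 : y ∉ X2 := by rw [hX2, mem_firstSet, hydef] ; show ¬ (k < k) ; omega
  have hxnB2 : x ∉ X2ᶜ := by
    rw [Finset.notMem_compl] ; exact hxX2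
  have sub12 : X1 ⊆ X2 := firstSet_mono (by omega)
  have sub23 : X2 ⊆ X3 := firstSet_mono (by omega)
  have sub13 : X1 ⊆ X3 := firstSet_mono (by omega)
  have subB : X2ᶜ ⊆ X1ᶜ := Finset.compl_subset_compl.mpr sub12
  have d2 : Disjoint X2 (X2ᶜ) := disjoint_compl_right
  -- operators
  set S1 := symOn F H n X1 with hS1
  set S2 := symOn F H n X2 with hS2
  set S3 := symOn F H n X3 with hS3
  set Aq := altOn F H n (X2ᶜ) with hAq
  set Aq1 := altOn F H n (X1ᶜ) with hAq1
  -- operator identities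
  have g1 : S2 * S1 = S2 := sym_mul_sym F H sub12
  have gSS : S2 * S2 = S2 := sym_mul_sym F H (Finset.Subset.refl _)
  have gS1S1 : S1 * S1 = S1 := sym_mul_sym F H (Finset.Subset.refl _)
  have g2 : Aq * Aq1 = Aq1 := alt_mul_alt' F H subB
  have gAA : Aq * Aq = Aq := alt_mul_alt F H (Finset.Subset.refl _)
  have g3 : S3 * S2 = S3 := sym_mul_sym F H sub23
  have g3' : S3 * S1 = S3 := sym_mul_sym F H sub13
  have g4 : S3 * Aq1 = 0 := sym_mul_alt_eq_zero F H hxX3 hxB1 hyX3 hyB1 hxny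
  have gc : S2 * Aq = Aq * S2 := sym_mul_alt_comm F H d2
  -- applied identities
  have aS2S1 : ∀ w, S2 (S1 w) = S2 w := fun w => by
    have h := LinearMap.congr_fun g1 w ; simpa [Module.End.mul_apply] using h
  have aS2S2 : ∀ w, S2 (S2 w) = S2 w := fun w => by
    have h := LinearMap.congr_fun gSS w ; simpa [Module.End.mul_apply] using h
  have aS1S1 : ∀ w, S1 (S1 w) = S1 w := fun w => by
    have h := LinearMap.congr_fun gS1S1 w ; simpa [Module.End.mul_apply] using h
  have aAqAq1 : ∀ w, Aq (Aq1 w) = Aq1 w := fun w => by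
    have h := LinearMap.congr_fun g2 w ; simpa [Module.End.mul_apply] using h
  have aS2Aq : ∀ w, S2 (Aq w) = Aq (S2 w) := fun w => by
    have h := LinearMap.congr_fun gc w ; simpa [Module.End.mul_apply] using h
  -- membership in Hmix n k gives fixed points
  have hmixFix : ∀ v, v ∈ Hmix F H n k → S2 v = v ∧ Aq v = v := by
    rintro v ⟨z, rfl⟩
    rw [LinearMap.comp_apply]
    constructor
    · exact aS2S2 _
    · rw [← aS2Aq]
      have h := LinearMap.congr_fun gAA z
      simp only [Module.End.mul_apply] at h
      rw [h]
  -- membership in Hmix via fixed form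
  have hmixMem : ∀ w, S2 (Aq w) ∈ Hmix F H n k := fun w => ⟨w, rfl⟩
  have hmixMem1 : ∀ w, S1 (Aq1 w) ∈ Hmix F H n (k - 1) := fun w => ⟨w, rfl⟩
  -- nonzero scalars
  have hkF : ((k : ℕ) : F) ≠ 0 := Nat.cast_ne_zero.mpr (by omega)
  have hk1F : ((k + 1 : ℕ) : F) ≠ 0 := Nat.cast_ne_zero.mpr (by omega)
  have hq1F : ((q + 1 : ℕ) : F) ≠ 0 := Nat.cast_ne_zero.mpr (by omega)
  have hkqF : ((k : F) + (q : F)) ≠ 0 := by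
    have : ((k + q : ℕ) : F) ≠ 0 := Nat.cast_ne_zero.mpr (by omega)
    push_cast at this
    exact this
  -- dStarOp identities
  have dStar_k : ∀ w, dStarOp F H n k w = ((k : ℕ) : F) • S2 w := fun w => by
    rw [dStarOp, LinearMap.smul_apply]
  have dStar_k1 : ∀ w, dStarOp F H n (k + 1) w = ((k + 1 : ℕ) : F) • S3 w := fun w => by
    rw [dStarOp, LinearMap.smul_apply]
  -- image of dStarOp k on Hmix (k-1) : the easy inclusions
  have himHmix : ∀ z, dStarOp F H n k (S1 (Aq1 z)) ∈ Hmix F H n k := by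
    intro z
    rw [dStar_k, aS2S1]
    have h2 : S2 (Aq1 z) = S2 (Aq (Aq1 z)) := by rw [aAqAq1]
    rw [h2]
    exact Submodule.smul_mem _ _ (hmixMem _)
  have himKer : ∀ z, dStarOp F H n k (S1 (Aq1 z)) ∈ LinearMap.ker (dStarOp F H n (k + 1)) := by
    intro z
    rw [LinearMap.mem_ker, dStar_k, map_smul, dStar_k1]
    have h1 : S3 (S2 (S1 (Aq1 z))) = 0 := by
      have e1 := LinearMap.congr_fun g3 (S1 (Aq1 z))
      simp only [Module.End.mul_apply] at e1
      have e2 := LinearMap.congr_fun g3' (Aq1 z)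
      simp only [Module.End.mul_apply] at e2
      have e3 := LinearMap.congr_fun g4 z
      simp only [Module.End.mul_apply, LinearMap.zero_apply] at e3
      rw [e1, e2, e3]
    rw [h1, smul_zero, smul_zero]
  -- every Hgen a with a.card = k - 1 is killed by dStarOp (k+1)
  have hSpanKer : HmixSpan F H n (k - 1) ≤ LinearMap.ker (dStarOp F H n (k + 1)) := by
    rw [HmixSpan]
    refine iSup₂_le ?_
    intro a ha
    rintro v ⟨z, rfl⟩
    rw [LinearMap.mem_ker, LinearMap.comp_apply, dStar_k1]
    have hcard : (X3 \ a).card ≥ 2 := by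
      have h1 := Finset.le_card_sdiff a X3
      rw [c3, ha] at h1
      omega
    obtain ⟨i, hi, j, hj, hij⟩ := Finset.one_lt_card.mp (by omega : 1 < (X3 \ a).card)
    have hiX3 : i ∈ X3 := (Finset.mem_sdiff.mp hi).1
    have hia : i ∈ aᶜ := Finset.mem_compl.mpr (Finset.mem_sdiff.mp hi).2
    have hjX3 : j ∈ X3 := (Finset.mem_sdiff.mp hj).1
    have hja : j ∈ aᶜ := Finset.mem_compl.mpr (Finset.mem_sdiff.mp hj).2
    have hz : S3 (symOn F H n a (altOn F H n aᶜ z)) = 0 := by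
      have hcomm := LinearMap.congr_fun (sym_mul_alt_comm F H (disjoint_compl_right : Disjoint a aᶜ)) z
      simp only [Module.End.mul_apply] at hcomm
      rw [hcomm]
      have hzero := LinearMap.congr_fun
        (sym_mul_alt_eq_zero F H hiX3 hia hjX3 hja hij) (symOn F H n a z)
      simp only [Module.End.mul_apply, LinearMap.zero_apply] at hzero
      rw [hzero]
    rw [hz, smul_zero]
  -- image of dStarOp k is inside the span of the Hgen a with a.card = k - 1
  have himSpan : ∀ z, dStarOp F H n k (S1 (Aq1 z)) ∈ HmixSpan F H n (k - 1) := by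
    intro z
    rw [dStar_k]
    have hE := sym_insert F H (b := X1) (x := x) (by
      rw [hX1, mem_firstSet, hxdef]
      show ¬ (k - 1 < k - 1)
      omega)
    rw [f1, c1] at hE
    have hc : (k - 1 + 1 : ℕ) = k := by omega
    rw [hc] at hE
    have hE2 := LinearMap.congr_fun hE (S1 (Aq1 z))
    simp only [LinearMap.smul_apply, LinearMap.sum_apply, Module.End.mul_apply] at hE2
    rw [hE2]
    refine Submodule.sum_mem _ ?_
    intro j hj
    rw [aS1S1]
    -- the term permMap (swap x j) (S1 (Aq1 z)) lies in Hgen of the image set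
    have hconj : permMap F H n (Equiv.swap x j) (S1 (Aq1 z)) =
        (symOn F H n (X1.image (Equiv.swap x j)) ∘ₗ
          altOn F H n (X1.image (Equiv.swap x j))ᶜ) (permMap F H n (Equiv.swap x j) z) := by
      rw [LinearMap.comp_apply, compl_image]
      have h1 := LinearMap.congr_fun (pm_mul_sym_conj F H (Equiv.swap x j) X1) (Aq1 z)
      simp only [Module.End.mul_apply] at h1
      have h2 := LinearMap.congr_fun (pm_mul_alt_conj F H (Equiv.swap x j) (X1ᶜ)) z
      simp only [Module.End.mul_apply] at h2
      rw [hS1, h1, h2]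
    rw [hconj]
    have hmem : (symOn F H n (X1.image (Equiv.swap x j)) ∘ₗ
        altOn F H n (X1.image (Equiv.swap x j))ᶜ) (permMap F H n (Equiv.swap x j) z) ∈
        Hgen F H n (X1.image (Equiv.swap x j)) := ⟨_, rfl⟩
    have hcard : (X1.image (Equiv.swap x j)).card = k - 1 := by
      rw [Finset.card_image_of_injective _ (Equiv.swap x j).injective, c1]
    refine Submodule.mem_iSup_of_mem (X1.image (Equiv.swap x j)) ?_
    refine Submodule.mem_iSup_of_mem hcard ?_
    exact hmem
  -- the hard direction: Hmix ⊓ ker ≤ image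
  have hHard : ∀ v, v ∈ Hmix F H n k → dStarOp F H n (k + 1) v = 0 →
      v ∈ Submodule.map (dStarOp F H n k) (Hmix F H n (k - 1)) := by
    intro v hv hker
    obtain ⟨hS, hA⟩ := hmixFix v hv
    have hT : S3 v = 0 := by
      rw [dStar_k1] at hker
      rcases smul_eq_zero.mp hker with h | h
      · exact absurd h hk1F
      · exact h
    -- Step 1: expansion of S3 applied to v
    have hE := sym_insert F H (b := X2) (x := y) hynX2
    rw [f2, c2] at hE
    have hE2 := LinearMap.congr_fun hE v
    simp only [LinearMap.smul_apply, LinearMap.sum_apply, Module.End.mul_apply] at hE2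
    rw [← hS3, hT, smul_zero, ← f2, Finset.sum_insert hynX2] at hE2
    have hswapyy : Equiv.swap y y = 1 := by rw [Equiv.swap_self] ; rfl
    rw [hswapyy, pm_one] at hE2
    simp only [Module.End.one_apply] at hE2
    rw [hS] at hE2
    have e2 : ∑ i ∈ X2, permMap F H n (Equiv.swap y i) v = -v :=
      eq_neg_of_add_eq_zero_right hE2.symm
    -- Step 2: the cross terms are constant (first index)
    have h3a : ∀ i ∈ X2, ∀ i' ∈ X2, ∀ j ∈ X2ᶜ,
        Aq (S2 (permMap F H n (Equiv.swap i j) v)) =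
          Aq (S2 (permMap F H n (Equiv.swap i' j) v)) := by
      intro i hi i' hi' j hj
      have hji : j ≠ i := fun h => (Finset.mem_compl.mp hj) (h ▸ hi)
      have hji' : j ≠ i' := fun h => (Finset.mem_compl.mp hj) (h ▸ hi')
      have hρmem : Equiv.swap i i' ∈ permsOn n X2 := swap_mem_permsOn hi hi'
      have h1 : Equiv.swap i i' i = i' := Equiv.swap_apply_left i i'
      have h2 : Equiv.swap i i' j = j := Equiv.swap_apply_of_ne_of_ne hji hji'
      have key : Equiv.swap i' j = Equiv.swap i i' * Equiv.swap i j * (Equiv.swap i i')⁻¹ := by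
        conv_lhs => rw [← h1, ← h2]
        exact Equiv.swap_apply_apply (Equiv.swap i i') i j
      have hEqv : permMap F H n (Equiv.swap i' j) v =
          permMap F H n (Equiv.swap i i') (permMap F H n (Equiv.swap i j)
            (permMap F H n (Equiv.swap i i') v)) := by
        rw [key, Equiv.swap_inv, pm_mul, pm_mul]
        simp [Module.End.mul_apply]
      have hPv : permMap F H n (Equiv.swap i i') v = v := by
        have h := LinearMap.congr_fun (pm_mul_sym F H hρmem) v
        simp only [Module.End.mul_apply] at h
        rw [← hS2] at h
        rw [hS] at h
        exact h
      have habs := LinearMap.congr_fun (sym_mul_pm F H hρmem)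
        (permMap F H n (Equiv.swap i j) v)
      simp only [Module.End.mul_apply] at habs
      rw [← hS2] at habs
      rw [hEqv, hPv, habs]
    -- Step 3: the cross terms are constant (second index)
    have h3b : ∀ i ∈ X2, ∀ j ∈ X2ᶜ, ∀ j' ∈ X2ᶜ,
        Aq (S2 (permMap F H n (Equiv.swap i j) v)) =
          Aq (S2 (permMap F H n (Equiv.swap i j') v)) := by
      intro i hi j hj j' hj'
      by_cases hjj : j = j'
      · rw [hjj]
      have hij : i ≠ j := fun h => (Finset.mem_compl.mp hj) (h ▸ hi)
      have hij' : i ≠ j' := fun h => (Finset.mem_compl.mp hj') (h ▸ hi)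
      have hτmem : Equiv.swap j j' ∈ permsOn n (X2ᶜ) := swap_mem_permsOn hj hj'
      have h1 : Equiv.swap j j' i = i := Equiv.swap_apply_of_ne_of_ne hij hij'
      have h2 : Equiv.swap j j' j = j' := Equiv.swap_apply_left j j'
      have key : Equiv.swap i j' = Equiv.swap j j' * Equiv.swap i j * (Equiv.swap j j')⁻¹ := by
        conv_lhs => rw [← h2, ← h1]
        exact Equiv.swap_apply_apply (Equiv.swap j j') i j
      have hEqv : permMap F H n (Equiv.swap i j') v =
          permMap F H n (Equiv.swap j j') (permMap F H n (Equiv.swap i j)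
            (permMap F H n (Equiv.swap j j') v)) := by
        rw [key, Equiv.swap_inv, pm_mul, pm_mul]
        simp [Module.End.mul_apply]
      have hPv : permMap F H n (Equiv.swap j j') v = -v := by
        have h := LinearMap.congr_fun (pm_mul_alt F H hτmem) v
        simp only [Module.End.mul_apply, LinearMap.smul_apply] at h
        rw [← hAq] at h
        rw [hA, sgn_swap F hjj] at h
        rw [h]
        exact neg_one_smul F v
      have hout : ∀ w, Aq (S2 (permMap F H n (Equiv.swap j j') w)) = -(Aq (S2 w)) := by
        intro w
        have hcomm := LinearMap.congr_fun (pm_mul_sym_comm F H d2 hτmem) w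
        simp only [Module.End.mul_apply] at hcomm
        rw [← hS2] at hcomm
        rw [← hcomm]
        have halt := LinearMap.congr_fun (alt_mul_pm F H hτmem) (S2 w)
        simp only [Module.End.mul_apply, LinearMap.smul_apply] at halt
        rw [← hAq] at halt
        rw [halt, sgn_swap F hjj]
        exact neg_one_smul F _
      rw [hEqv, hPv, hout]
      simp only [map_neg, neg_neg]
    -- Step 4: value of the constant
    have e4 : ((k : ℕ) : F) • Aq (S2 (permMap F H n (Equiv.swap x y) v)) = -v := by
      have h := congrArg (fun w => Aq (S2 w)) e2
      simp only [map_sum, map_neg] at h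
      rw [hS, hA] at h
      have hterm : ∀ i ∈ X2, Aq (S2 (permMap F H n (Equiv.swap y i) v)) =
          Aq (S2 (permMap F H n (Equiv.swap x y) v)) := by
        intro i hi
        rw [Equiv.swap_comm]
        exact h3a i hi x hxX2 y hyB2
      rw [Finset.sum_congr rfl hterm, Finset.sum_const, c2, ← Nat.cast_smul_eq_nsmul F] at h
      exact h
    -- Step 5: expansion of S2 (Aq1 v)
    have hE5 := alt_insert F H (b := X2ᶜ) (x := x) hxnB2
    rw [cB2] at hE5
    have hE5v := LinearMap.congr_fun hE5 v
    simp only [LinearMap.smul_apply, LinearMap.sum_apply, Module.End.mul_apply] at hE5v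
    rw [Finset.sum_insert hxnB2] at hE5v
    have hswxx : Equiv.swap x x = 1 := by rw [Equiv.swap_self] ; rfl
    rw [hswxx, sgn_one, pm_one] at hE5v
    simp only [Module.End.one_apply, one_smul] at hE5v
    rw [← hAq] at hE5v
    rw [hA] at hE5v
    have hsgn : ∀ j ∈ X2ᶜ, sgn F (Equiv.swap x j) • (permMap F H n (Equiv.swap x j) v) =
        -(permMap F H n (Equiv.swap x j) v) := by
      intro j hj
      have hxj : x ≠ j := fun h => hxnB2 (h ▸ hj)
      rw [sgn_swap F hxj]
      exact neg_one_smul F _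
    rw [Finset.sum_congr rfl hsgn, Finset.sum_neg_distrib] at hE5v
    -- hE5v : ((q+1:ℕ):F) • altOn (insert x X2ᶜ) v = v + -(∑ j ∈ X2ᶜ, permMap (swap x j) v)
    have h5 := congrArg (fun w => Aq (S2 w)) hE5v
    simp only [map_smul, map_add, map_neg, map_sum] at h5
    rw [hS, hA] at h5
    have hterm2 : ∀ j ∈ X2ᶜ, Aq (S2 (permMap F H n (Equiv.swap x j) v)) =
        Aq (S2 (permMap F H n (Equiv.swap x y) v)) := fun j hj => h3b x hxX2 j hj y hyB2
    rw [Finset.sum_congr rfl hterm2, Finset.sum_const, cB2, ← Nat.cast_smul_eq_nsmul F] at h5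
    rw [f3] at h5
    rw [← hAq1] at h5
    have hinv : Aq (S2 (Aq1 v)) = S2 (Aq1 v) := by
      rw [← aS2Aq, aAqAq1]
    rw [hinv] at h5
    -- substitute the value of the constant
    have hu0v : Aq (S2 (permMap F H n (Equiv.swap x y) v)) = -(((k : ℕ) : F)⁻¹ • v) := by
      calc Aq (S2 (permMap F H n (Equiv.swap x y) v))
          = ((k:ℕ):F)⁻¹ • (((k:ℕ):F) • Aq (S2 (permMap F H n (Equiv.swap x y) v))) :=
            (inv_smul_smul₀ hkF _).symm
        _ = ((k:ℕ):F)⁻¹ • (-v) := by rw [e4]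
        _ = -(((k:ℕ):F)⁻¹ • v) := smul_neg _ _
    rw [hu0v] at h5
    simp only [smul_neg, neg_neg, smul_smul] at h5
    have h6 : v + (((q:ℕ):F) * ((k:ℕ):F)⁻¹) • v =
        ((1:F) + ((q:ℕ):F) * ((k:ℕ):F)⁻¹) • v := by rw [add_smul, one_smul]
    rw [h6] at h5
    have hS2Aq1 : S2 (Aq1 v) =
        (((q+1:ℕ):F)⁻¹ * ((1:F) + ((q:ℕ):F) * ((k:ℕ):F)⁻¹)) • v := by
      rw [← smul_smul, ← h5, inv_smul_smul₀ hq1F]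
    -- nonvanishing of the scalar
    have hform : (1:F) + ((q:ℕ):F) * ((k:ℕ):F)⁻¹ =
        (((k:ℕ):F) + ((q:ℕ):F)) * ((k:ℕ):F)⁻¹ := by
      field_simp
    have hc'ne : (((q+1:ℕ):F)⁻¹ * ((1:F) + ((q:ℕ):F) * ((k:ℕ):F)⁻¹)) ≠ 0 := by
      rw [hform]
      exact mul_ne_zero (inv_ne_zero hq1F) (mul_ne_zero hkqF (inv_ne_zero hkF))
    -- exhibit the preimage
    set c : F := ((q+1:ℕ):F)⁻¹ * ((1:F) + ((q:ℕ):F) * ((k:ℕ):F)⁻¹) with hcdef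
    set t : F := (((k:ℕ):F) * c)⁻¹ with htdef
    refine ⟨(symOn F H n X1 ∘ₗ altOn F H n (X1ᶜ)) (t • v), ⟨t • v, rfl⟩, ?_⟩
    rw [LinearMap.comp_apply, ← hS1, ← hAq1, dStar_k]
    rw [show Aq1 (t • v) = t • Aq1 v from map_smul _ _ _]
    rw [show S1 (t • Aq1 v) = t • S1 (Aq1 v) from map_smul _ _ _]
    rw [show S2 (t • S1 (Aq1 v)) = t • S2 (S1 (Aq1 v)) from map_smul _ _ _]
    rw [aS2S1, hS2Aq1, smul_smul, smul_smul]
    have hscal : ((k:ℕ):F) * t * c = 1 := by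
      rw [htdef]
      have hre : ((k:ℕ):F) * (((k:ℕ):F) * c)⁻¹ * c =
          (((k:ℕ):F) * c) * (((k:ℕ):F) * c)⁻¹ := by ring
      rw [hre, mul_inv_cancel₀ (mul_ne_zero hkF hc'ne)]
    rw [hscal, one_smul]
  -- part 2
  have hPart2 : Hmix F H n k ⊓ LinearMap.ker (dStarOp F H n (k + 1)) =
      Submodule.map (dStarOp F H n k) (Hmix F H n (k - 1)) := by
    apply le_antisymm
    · rintro v ⟨hv1, hv2⟩
      exact hHard v hv1 (LinearMap.mem_ker.mp hv2)
    · rintro v ⟨w, ⟨z, rfl⟩, rfl⟩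
      rw [LinearMap.comp_apply]
      exact ⟨himHmix z, himKer z⟩
  refine ⟨?_, hPart2⟩
  -- part 1
  apply le_antisymm
  · exact inf_le_inf_left _ hSpanKer
  · rw [hPart2]
    rintro v ⟨w, ⟨z, rfl⟩, rfl⟩
    rw [LinearMap.comp_apply]
    exact ⟨himHmix z, himSpan z⟩

end
end
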